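/- arXiv:2205.09432 — 3 statements merged into one kernel-verified Lean document; each statement's English description precedes it below -/
import Mathlib

section
/- Let A be a smooth operator field on an open set U ⊆ ℝⁿ and let f, g : U → ℝ be smooth functions. Define the operator field f·Id + g·A by (f·Id + g·A)(x) = f(x)·Id + g(x)·A(x). Then for all smooth vector fields X, Y and all x ∈ U, the Haantjes torsions satisfy H_{f·Id + g·A}(X,Y)(x) = g(x)⁴ · H_A(X,Y)(x). -/
noncomputable section

/-- Points of ℝⁿ, modeled as `Fin n → ℝ`. -/
abbrev Vec (n : ℕ) := Fin n → ℝ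

/-- Vector fields on (an open subset of) ℝⁿ. -/
abbrev VF (n : ℕ) := Vec n → Vec n

/-- Operator fields: smooth (1,1)-tensor fields, i.e. maps U → (ℝⁿ →L[ℝ] ℝⁿ). -/
abbrev OpField (n : ℕ) := Vec n → (Vec n →L[ℝ] Vec n)

/-- Lie bracket of vector fields: [V,W](x) = DW(x)(V(x)) − DV(x)(W(x)). -/
noncomputable def lieBracket {n : ℕ} (V W : VF n) : VF n :=
  fun x => fderiv ℝ W x (V x) - fderiv ℝ V x (W x)

/-- Action of an operator field on a vector field: (A V)(x) = A(x)(V(x)). -/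
noncomputable def opApp {n : ℕ} (A : OpField n) (V : VF n) : VF n := fun x => A x (V x)

/-- Generalized Nijenhuis torsion of level m:
τ⁽⁰⁾_A(V,W) = [V,W] and
τ⁽ᵐ⁾_A(V,W) = A²τ⁽ᵐ⁻¹⁾_A(V,W) + τ⁽ᵐ⁻¹⁾_A(AV,AW) − A(τ⁽ᵐ⁻¹⁾_A(V,AW) + τ⁽ᵐ⁻¹⁾_A(AV,W)).
Level 1 is the Nijenhuis torsion, level 2 the Haantjes torsion. -/
noncomputable def genTorsion {n : ℕ} (A : OpField n) : ℕ → VF n → VF n → VF n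
  | 0, V, W => lieBracket V W
  | (m+1), V, W => fun x =>
      A x (A x (genTorsion A m V W x))
      + genTorsion A m (opApp A V) (opApp A W) x
      - A x (genTorsion A m V (opApp A W) x + genTorsion A m (opApp A V) W x)
lemma genTorsion_one {n} (A : OpField n) (V W : VF n) (x : Vec n) :
    genTorsion A 1 V W x = A x (A x (lieBracket V W x))
      + lieBracket (opApp A V) (opApp A W) x
      - A x (lieBracket V (opApp A W) x + lieBracket (opApp A V) W x) := rfl

lemma genTorsion_two {n} (A : OpField n) (V W : VF n) (x : Vec n) :
    genTorsion A 2 V W x = A x (A x (genTorsion A 1 V W x))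
      + genTorsion A 1 (opApp A V) (opApp A W) x
      - A x (genTorsion A 1 V (opApp A W) x + genTorsion A 1 (opApp A V) W x) := rfl

lemma diffAt {n : ℕ} {U : Set (Vec n)} (hU : IsOpen U) {E : Type*} [NormedAddCommGroup E]
    [NormedSpace ℝ E] {F : Vec n → E} (h : ContDiffOn ℝ (⊤ : ℕ∞) F U) {x : Vec n}
    (hx : x ∈ U) : DifferentiableAt ℝ F x :=
  (h.contDiffAt (hU.mem_nhds hx)).differentiableAt (by simp)

lemma fderiv_comb {n : ℕ} {φ ψ : Vec n → ℝ} {V V' : VF n} {x : Vec n}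
    (hφ : DifferentiableAt ℝ φ x) (hV : DifferentiableAt ℝ V x)
    (hψ : DifferentiableAt ℝ ψ x) (hV' : DifferentiableAt ℝ V' x) (u : Vec n) :
    fderiv ℝ (fun y => φ y • V y + ψ y • V' y) x u
      = (fderiv ℝ φ x u) • V x + φ x • fderiv ℝ V x u
        + (fderiv ℝ ψ x u) • V' x + ψ x • fderiv ℝ V' x u := by
  rw [fderiv_fun_add (f := fun y => φ y • V y) (g := fun y => ψ y • V' y) (hφ.smul hV) (hψ.smul hV'), fderiv_fun_smul hφ hV, fderiv_fun_smul hψ hV']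
  simp [ContinuousLinearMap.add_apply, ContinuousLinearMap.smul_apply,
    ContinuousLinearMap.smulRight_apply]
  module

lemma genTorsion_congr {n} {U : Set (Vec n)} (hU : IsOpen U) (m : ℕ) :
    ∀ (B B' : OpField n) (V V' W W' : VF n),
      (∀ y ∈ U, B y = B' y) → (∀ y ∈ U, V y = V' y) → (∀ y ∈ U, W y = W' y) →
      ∀ x ∈ U, genTorsion B m V W x = genTorsion B' m V' W' x := by
  induction m with
  | zero =>
    intro B B' V V' W W' hB hV hW x hx
    have hVe : V =ᶠ[nhds x] V' :=
      Filter.eventuallyEq_of_mem (hU.mem_nhds hx) (fun y hy => hV y hy)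
    have hWe : W =ᶠ[nhds x] W' :=
      Filter.eventuallyEq_of_mem (hU.mem_nhds hx) (fun y hy => hW y hy)
    show lieBracket V W x = lieBracket V' W' x
    simp [lieBracket, hVe.fderiv_eq, hWe.fderiv_eq, hV x hx, hW x hx]
  | succ m ih =>
    intro B B' V V' W W' hB hV hW x hx
    have hAV : ∀ y ∈ U, opApp B V y = opApp B' V' y := fun y hy => by
      simp [opApp, hB y hy, hV y hy]
    have hAW : ∀ y ∈ U, opApp B W y = opApp B' W' y := fun y hy => by
      simp [opApp, hB y hy, hW y hy]
    show B x (B x (genTorsion B m V W x)) + genTorsion B m (opApp B V) (opApp B W) x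
        - B x (genTorsion B m V (opApp B W) x + genTorsion B m (opApp B V) W x) = _
    rw [ih B B' V V' W W' hB hV hW x hx,
      ih B B' (opApp B V) (opApp B' V') (opApp B W) (opApp B' W') hB hAV hAW x hx,
      ih B B' V V' (opApp B W) (opApp B' W') hB hV hAW x hx,
      ih B B' (opApp B V) (opApp B' V') W W' hB hAV hW x hx, hB x hx]
    rfl

lemma tau_comb_left {n} {U : Set (Vec n)} (hU : IsOpen U) {A : OpField n}
    (hA : ContDiffOn ℝ (⊤ : ℕ∞) A U) {φ ψ : Vec n → ℝ} {V V' W : VF n}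
    (hφ : ContDiffOn ℝ (⊤ : ℕ∞) φ U) (hψ : ContDiffOn ℝ (⊤ : ℕ∞) ψ U)
    (hV : ContDiffOn ℝ (⊤ : ℕ∞) V U) (hV' : ContDiffOn ℝ (⊤ : ℕ∞) V' U)
    (hW : ContDiffOn ℝ (⊤ : ℕ∞) W U) {x : Vec n} (hx : x ∈ U) :
    genTorsion A 1 (fun y => φ y • V y + ψ y • V' y) W x
      = φ x • genTorsion A 1 V W x + ψ x • genTorsion A 1 V' W x := by
  have key : opApp A (fun y => φ y • V y + ψ y • V' y)
      = fun y => φ y • opApp A V y + ψ y • opApp A V' y := by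
    funext y; simp [opApp, map_add, map_smul]
  have hAV : ContDiffOn ℝ (⊤ : ℕ∞) (opApp A V) U := by unfold opApp; exact hA.clm_apply hV
  have hAV' : ContDiffOn ℝ (⊤ : ℕ∞) (opApp A V') U := by unfold opApp; exact hA.clm_apply hV'
  have hAW : ContDiffOn ℝ (⊤ : ℕ∞) (opApp A W) U := by unfold opApp; exact hA.clm_apply hW
  have hφd := diffAt hU hφ hx; have hψd := diffAt hU hψ hx
  have hVd := diffAt hU hV hx; have hV'd := diffAt hU hV' hx
  have hAVd := diffAt hU hAV hx; have hAV'd := diffAt hU hAV' hx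
  simp only [genTorsion_one, key, lieBracket]
  simp only [fderiv_comb hφd hVd hψd hV'd, fderiv_comb hφd hAVd hψd hAV'd]
  simp only [map_sub, map_add, map_smul, smul_eq_mul, opApp]
  module

lemma tau_comb_right {n} {U : Set (Vec n)} (hU : IsOpen U) {A : OpField n}
    (hA : ContDiffOn ℝ (⊤ : ℕ∞) A U) {χ ω : Vec n → ℝ} {V W W' : VF n}
    (hχ : ContDiffOn ℝ (⊤ : ℕ∞) χ U) (hω : ContDiffOn ℝ (⊤ : ℕ∞) ω U)
    (hV : ContDiffOn ℝ (⊤ : ℕ∞) V U) (hW : ContDiffOn ℝ (⊤ : ℕ∞) W U)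
    (hW' : ContDiffOn ℝ (⊤ : ℕ∞) W' U) {x : Vec n} (hx : x ∈ U) :
    genTorsion A 1 V (fun y => χ y • W y + ω y • W' y) x
      = χ x • genTorsion A 1 V W x + ω x • genTorsion A 1 V W' x := by
  have key : opApp A (fun y => χ y • W y + ω y • W' y)
      = fun y => χ y • opApp A W y + ω y • opApp A W' y := by
    funext y; simp [opApp, map_add, map_smul]
  have hAW : ContDiffOn ℝ (⊤ : ℕ∞) (opApp A W) U := by unfold opApp; exact hA.clm_apply hW
  have hAW' : ContDiffOn ℝ (⊤ : ℕ∞) (opApp A W') U := by unfold opApp; exact hA.clm_apply hW'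
  have hAV : ContDiffOn ℝ (⊤ : ℕ∞) (opApp A V) U := by unfold opApp; exact hA.clm_apply hV
  have hχd := diffAt hU hχ hx; have hωd := diffAt hU hω hx
  have hWd := diffAt hU hW hx; have hW'd := diffAt hU hW' hx
  have hAWd := diffAt hU hAW hx; have hAW'd := diffAt hU hAW' hx
  simp only [genTorsion_one, key, lieBracket]
  simp only [fderiv_comb hχd hWd hωd hW'd, fderiv_comb hχd hAWd hωd hAW'd]
  simp only [map_sub, map_add, map_smul, smul_eq_mul, opApp]
  module

lemma tauC {n} {U : Set (Vec n)} (hU : IsOpen U) {A : OpField n}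
    (hA : ContDiffOn ℝ (⊤ : ℕ∞) A U) {f g : Vec n → ℝ}
    (hf : ContDiffOn ℝ (⊤ : ℕ∞) f U) (hg : ContDiffOn ℝ (⊤ : ℕ∞) g U)
    {V W : VF n} (hV : ContDiffOn ℝ (⊤ : ℕ∞) V U) (hW : ContDiffOn ℝ (⊤ : ℕ∞) W U)
    {x : Vec n} (hx : x ∈ U) :
    genTorsion (fun y => f y • ContinuousLinearMap.id ℝ (Vec n) + g y • A y) 1 V W x
      = g x ^ 2 • genTorsion A 1 V W x
        + g x • ( (fderiv ℝ f x (A x (V x))) • W x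
          - (fderiv ℝ f x (A x (W x))) • V x
          + (fderiv ℝ g x (A x (V x)) - fderiv ℝ f x (V x)) • A x (W x)
          - (fderiv ℝ g x (A x (W x)) - fderiv ℝ f x (W x)) • A x (V x)
          - (fderiv ℝ g x (V x)) • A x (A x (W x))
          + (fderiv ℝ g x (W x)) • A x (A x (V x)) ) := by
  have oV : opApp (fun y => f y • ContinuousLinearMap.id ℝ (Vec n) + g y • A y) V
      = fun y => f y • V y + g y • opApp A V y := by funext y; simp [opApp]
  have oW : opApp (fun y => f y • ContinuousLinearMap.id ℝ (Vec n) + g y • A y) W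
      = fun y => f y • W y + g y • opApp A W y := by funext y; simp [opApp]
  have hAV : ContDiffOn ℝ (⊤ : ℕ∞) (opApp A V) U := by unfold opApp; exact hA.clm_apply hV
  have hAW : ContDiffOn ℝ (⊤ : ℕ∞) (opApp A W) U := by unfold opApp; exact hA.clm_apply hW
  have hfd := diffAt hU hf hx; have hgd := diffAt hU hg hx
  have hVd := diffAt hU hV hx; have hWd := diffAt hU hW hx
  have hAVd := diffAt hU hAV hx; have hAWd := diffAt hU hAW hx
  simp only [genTorsion_one, oV, oW, lieBracket]
  simp only [fderiv_comb hfd hVd hgd hAVd, fderiv_comb hfd hWd hgd hAWd]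
  simp only [ContinuousLinearMap.add_apply, ContinuousLinearMap.smul_apply,
    ContinuousLinearMap.id_apply, map_add, map_smul, map_sub, smul_eq_mul, opApp]
  module
/-- For smooth f, g and a smooth operator field A on an open U ⊆ ℝⁿ,
the Haantjes torsion of f·Id + g·A satisfies H_{f·Id+g·A}(X,Y)(x) = g(x)⁴·H_A(X,Y)(x). -/
theorem haantjes_f_id_plus_g_A {n : ℕ} (U : Set (Vec n)) (hU : IsOpen U)
    (A : OpField n) (hA : ContDiffOn ℝ (⊤ : ℕ∞) A U)
    (f g : Vec n → ℝ) (hf : ContDiffOn ℝ (⊤ : ℕ∞) f U) (hg : ContDiffOn ℝ (⊤ : ℕ∞) g U)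
    (B : OpField n)
    (hB : ∀ x ∈ U, B x = f x • ContinuousLinearMap.id ℝ (Vec n) + g x • A x) :
    ∀ X Y : VF n, ContDiffOn ℝ (⊤ : ℕ∞) X U → ContDiffOn ℝ (⊤ : ℕ∞) Y U →
      ∀ x ∈ U, genTorsion B 2 X Y x = (g x) ^ 4 • genTorsion A 2 X Y x := by
  intro X Y hX hY x hx
  have hrepl := genTorsion_congr hU 2 B
    (fun y => f y • ContinuousLinearMap.id ℝ (Vec n) + g y • A y)
    X X Y Y hB (fun _ _ => rfl) (fun _ _ => rfl) x hx
  rw [hrepl]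
  have hAX : ContDiffOn ℝ (⊤ : ℕ∞) (opApp A X) U := by unfold opApp; exact hA.clm_apply hX
  have hAY : ContDiffOn ℝ (⊤ : ℕ∞) (opApp A Y) U := by unfold opApp; exact hA.clm_apply hY
  have hCs : ContDiffOn ℝ (⊤ : ℕ∞)
      (fun y => f y • ContinuousLinearMap.id ℝ (Vec n) + g y • A y) U :=
    (hf.smul contDiffOn_const).add (hg.smul hA)
  have oX : opApp (fun y => f y • ContinuousLinearMap.id ℝ (Vec n) + g y • A y) X
      = fun y => f y • X y + g y • opApp A X y := by funext y; simp [opApp]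
  have oY : opApp (fun y => f y • ContinuousLinearMap.id ℝ (Vec n) + g y • A y) Y
      = fun y => f y • Y y + g y • opApp A Y y := by funext y; simp [opApp]
  have hPX : ContDiffOn ℝ (⊤ : ℕ∞) (fun y => f y • X y + g y • opApp A X y) U :=
    (hf.smul hX).add (hg.smul hAX)
  have hPY : ContDiffOn ℝ (⊤ : ℕ∞) (fun y => f y • Y y + g y • opApp A Y y) U :=
    (hf.smul hY).add (hg.smul hAY)
  rw [genTorsion_two, oX, oY,
    tauC hU hA hf hg hX hY hx, tauC hU hA hf hg hPX hPY hx,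
    tauC hU hA hf hg hX hPY hx, tauC hU hA hf hg hPX hY hx,
    tau_comb_left hU hA hf hg hX hAX hPY hx,
    tau_comb_left hU hA hf hg hX hAX hY hx,
    tau_comb_right hU hA hf hg hX hY hAY hx,
    tau_comb_right hU hA hf hg (by unfold opApp; exact hA.clm_apply hX) hY hAY hx]
  rw [genTorsion_two A X Y x]
  simp only [ContinuousLinearMap.add_apply, ContinuousLinearMap.smul_apply,
    ContinuousLinearMap.id_apply, map_add, map_smul, map_sub, smul_eq_mul, opApp]
  module
end
end

section
/- Let A be a smooth operator field on an open set U ⊆ ℝⁿ, let c₀, …, c_N : U → ℝ be smooth functions, and let P(A) be the operator field P(A)(x) = Σ_{k=0}^{N} c_k(x) A(x)ᵏ. Let Q_P(z,λ) = Σ_{k=1}^{N} c_k(x) Σ_{p+q=k−1} zᵖ λ^q be the Bézout quotient, so that P(z) − P(λ) = (z−λ)Q_P(z,λ). Then for every integer m ≥ 2 and all smooth vector fields X, Y, τ⁽ᵐ⁾_{P(A)}(X,Y) = R_{(Q_P(z,λ))ᵐ (Q_P(z,μ))ᵐ}(τ⁽ᵐ⁾_A)(X,Y), where the representation R is taken with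 respect to A and the polynomial (Q_P(z,λ))ᵐ(Q_P(z,μ))ᵐ in the variables (z,λ,μ). -/
noncomputable section

/-- The Bogoyavlenskij representation `R_S(T)` of a (1,2)-tensor-like map `T`
with respect to an operator field `A` and a polynomial `S(z,λ,μ)` in three variables
(variable 0 = z, variable 1 = λ, variable 2 = μ) with smooth-function coefficients:
`R_S(T)(V,W)(x) = Σ s_{ijk}(x) · A(x)ⁱ (T(AʲV, AᵏW)(x))`. -/
noncomputable def rep {n : ℕ} (A : OpField n) (S : MvPolynomial (Fin 3) (Vec n → ℝ))
    (T : VF n → VF n → VF n) : VF n → VF n → VF n :=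
  fun V W x => ∑ m ∈ S.support, (MvPolynomial.coeff m S) x •
    ((A x ^ (m 0)) (T (fun y => (A y ^ (m 1)) (V y)) (fun y => (A y ^ (m 2)) (W y)) x))

/-- The polynomial operator field P(A)(x) = Σ_{k=0}^{N} c_k(x)·A(x)ᵏ. -/
noncomputable def polyOp {n : ℕ} (A : OpField n) (c : ℕ → Vec n → ℝ) (N : ℕ) : OpField n :=
  fun x => ∑ k ∈ Finset.range (N + 1), c k x • A x ^ k

/-- The Bézout quotient Q_P(z, Xᵥ) = Σ_{k=1}^{N} c_k Σ_{p+q=k−1} zᵖ Xᵥ^q, as a polynomial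
in the three variables (z = X 0, λ = X 1, μ = X 2); `v` selects λ or μ. -/
noncomputable def bezoutQ {n : ℕ} (c : ℕ → Vec n → ℝ) (N : ℕ) (v : Fin 3) :
    MvPolynomial (Fin 3) (Vec n → ℝ) :=
  ∑ k ∈ Finset.Icc 1 N, MvPolynomial.C (c k) *
    ∑ p ∈ Finset.range k, MvPolynomial.X 0 ^ p * MvPolynomial.X v ^ (k - 1 - p)

/-! ### Auxiliary development -/

open MvPolynomial Finset

namespace BogAux

variable {n : ℕ}

/-- The field x ↦ A(x)ʲ(V(x)). -/
noncomputable def apow (A : OpField n) (j : ℕ) (V : VF n) : VF n := fun y => (A y ^ j) (V y)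

/-- The basic summand of the representation. -/
noncomputable def phiFn (A : OpField n) (T : VF n → VF n → VF n) (V W : VF n) (x : Vec n)
    (d : Fin 3 →₀ ℕ) : Vec n :=
  (A x ^ d 0) (T (fun y => (A y ^ d 1) (V y)) (fun y => (A y ^ d 2) (W y)) x)

/-- The representation as an additive monoid hom in the polynomial. -/
noncomputable def repHom (A : OpField n) (T : VF n → VF n → VF n) (V W : VF n) (x : Vec n) :
    MvPolynomial (Fin 3) (Vec n → ℝ) →+ Vec n :=
  (Finsupp.liftAddHom (fun d =>
    { toFun := fun (s : Vec n → ℝ) => s x • phiFn A T V W x d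
      map_zero' := by simp
      map_add' := fun a b => by simp [add_smul] })).comp
    AddMonoidAlgebra.coeffAddEquiv.toAddMonoidHom

lemma rep_eq_repHom (A : OpField n) (S : MvPolynomial (Fin 3) (Vec n → ℝ))
    (T : VF n → VF n → VF n) (V W : VF n) (x : Vec n) :
    rep A S T V W x = repHom A T V W x S := rfl

lemma repHom_monomial (A : OpField n) (T : VF n → VF n → VF n) (V W : VF n) (x : Vec n)
    (d : Fin 3 →₀ ℕ) (s : Vec n → ℝ) :
    repHom A T V W x (monomial d s) = s x • phiFn A T V W x d := by
  rw [repHom, AddMonoidHom.comp_apply]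
  show Finsupp.liftAddHom _ (Finsupp.single d s) = _
  rw [Finsupp.liftAddHom_apply_single]
  rfl

variable {U : Set (Vec n)}

lemma dAt {E : Type*} [NormedAddCommGroup E] [NormedSpace ℝ E] (hU : IsOpen U)
    {f : Vec n → E} (hf : ContDiffOn ℝ (⊤ : ℕ∞) f U) {x : Vec n} (hx : x ∈ U) :
    DifferentiableAt ℝ f x :=
  (hf.differentiableOn (by simp)).differentiableAt (hU.mem_nhds hx)

section Smooth

variable {A B : OpField n} {V W : VF n} {f : Vec n → ℝ}

lemma sm_pow (hA : ContDiffOn ℝ (⊤ : ℕ∞) A U) (j : ℕ) :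
    ContDiffOn ℝ (⊤ : ℕ∞) (fun x => A x ^ j) U := by
  induction j with
  | zero => simpa using contDiffOn_const
  | succ j ih => simpa [pow_succ] using ih.mul hA

lemma sm_clm (hB : ContDiffOn ℝ (⊤ : ℕ∞) B U) (hV : ContDiffOn ℝ (⊤ : ℕ∞) V U) :
    ContDiffOn ℝ (⊤ : ℕ∞) (fun y => B y (V y)) U := hB.clm_apply hV

lemma sm_opApp (hB : ContDiffOn ℝ (⊤ : ℕ∞) B U) (hV : ContDiffOn ℝ (⊤ : ℕ∞) V U) :
    ContDiffOn ℝ (⊤ : ℕ∞) (opApp B V) U := hB.clm_apply hV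

lemma sm_apow (hA : ContDiffOn ℝ (⊤ : ℕ∞) A U) (j : ℕ) (hV : ContDiffOn ℝ (⊤ : ℕ∞) V U) :
    ContDiffOn ℝ (⊤ : ℕ∞) (apow A j V) U := (sm_pow hA j).clm_apply hV

lemma sm_smul (hf : ContDiffOn ℝ (⊤ : ℕ∞) f U) (hV : ContDiffOn ℝ (⊤ : ℕ∞) V U) :
    ContDiffOn ℝ (⊤ : ℕ∞) (fun y => f y • V y) U := hf.smul hV

lemma sm_polyOp (hA : ContDiffOn ℝ (⊤ : ℕ∞) A U) {c : ℕ → Vec n → ℝ}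
    (hc : ∀ k, ContDiffOn ℝ (⊤ : ℕ∞) (c k) U) (N : ℕ) :
    ContDiffOn ℝ (⊤ : ℕ∞) (polyOp A c N) U := by
  apply ContDiffOn.sum
  intro k _
  exact (hc k).smul (sm_pow hA k)

lemma sm_sum {ι : Type*} (s : Finset ι) {F : ι → VF n}
    (hF : ∀ i ∈ s, ContDiffOn ℝ (⊤ : ℕ∞) (F i) U) :
    ContDiffOn ℝ (⊤ : ℕ∞) (fun y => ∑ i ∈ s, F i y) U := ContDiffOn.sum hF

end Smooth

section Lie

variable {V V' W : VF n} {f : Vec n → ℝ} {x : Vec n}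

lemma lie_add₁ (hV : DifferentiableAt ℝ V x) (hV' : DifferentiableAt ℝ V' x)
    (hW : DifferentiableAt ℝ W x) :
    lieBracket (fun y => V y + V' y) W x = lieBracket V W x + lieBracket V' W x := by
  simp only [lieBracket, fderiv_fun_add hV hV', ContinuousLinearMap.add_apply, map_add]
  abel

lemma lie_add₂ (hV : DifferentiableAt ℝ V x) (hW : DifferentiableAt ℝ W x)
    (hW' : DifferentiableAt ℝ V' x) :
    lieBracket V (fun y => W y + V' y) x = lieBracket V W x + lieBracket V V' x := by
  simp only [lieBracket, fderiv_fun_add hW hW', ContinuousLinearMap.add_apply, map_add]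
  abel

lemma lie_smul₁ (hf : DifferentiableAt ℝ f x) (hV : DifferentiableAt ℝ V x)
    (hW : DifferentiableAt ℝ W x) :
    lieBracket (fun y => f y • V y) W x
      = f x • lieBracket V W x - (fderiv ℝ f x (W x)) • V x := by
  simp only [lieBracket, fderiv_fun_smul hf hV, ContinuousLinearMap.add_apply,
    ContinuousLinearMap.smul_apply, ContinuousLinearMap.smulRight_apply, map_smul, smul_sub]
  abel

lemma lie_smul₂ (hf : DifferentiableAt ℝ f x) (hV : DifferentiableAt ℝ V x)
    (hW : DifferentiableAt ℝ W x) :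
    lieBracket V (fun y => f y • W y) x
      = f x • lieBracket V W x + (fderiv ℝ f x (V x)) • W x := by
  simp only [lieBracket, fderiv_fun_smul hf hW, ContinuousLinearMap.add_apply,
    ContinuousLinearMap.smul_apply, ContinuousLinearMap.smulRight_apply, map_smul, smul_sub]
  abel

lemma lie_sum₁ {ι : Type*} (s : Finset ι) {F : ι → VF n}
    (hF : ∀ i ∈ s, DifferentiableAt ℝ (F i) x) (hW : DifferentiableAt ℝ W x) :
    lieBracket (fun y => ∑ i ∈ s, F i y) W x = ∑ i ∈ s, lieBracket (F i) W x := by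
  simp only [lieBracket, fderiv_fun_sum hF, ContinuousLinearMap.sum_apply, map_sum,
    Finset.sum_sub_distrib]

lemma lie_sum₂ {ι : Type*} (s : Finset ι) {F : ι → VF n}
    (hF : ∀ i ∈ s, DifferentiableAt ℝ (F i) x) (hV : DifferentiableAt ℝ V x) :
    lieBracket V (fun y => ∑ i ∈ s, F i y) x = ∑ i ∈ s, lieBracket V (F i) x := by
  simp only [lieBracket, fderiv_fun_sum hF, ContinuousLinearMap.sum_apply, map_sum,
    Finset.sum_sub_distrib]

end Lie

section GT

variable {A : OpField n} {x : Vec n}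

lemma gt_succ (A : OpField n) (m : ℕ) (V W : VF n) (x : Vec n) :
    genTorsion A (m+1) V W x
      = A x (A x (genTorsion A m V W x))
        + genTorsion A m (opApp A V) (opApp A W) x
        - A x (genTorsion A m V (opApp A W) x + genTorsion A m (opApp A V) W x) := rfl

lemma opApp_add (A : OpField n) (V V' : VF n) :
    opApp A (fun y => V y + V' y) = fun y => opApp A V y + opApp A V' y := by
  funext y; simp [opApp]

lemma opApp_smul (A : OpField n) (f : Vec n → ℝ) (V : VF n) :
    opApp A (fun y => f y • V y) = fun y => f y • opApp A V y := by
  funext y; simp [opApp]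

lemma gt_add₁ (hU : IsOpen U) (hA : ContDiffOn ℝ (⊤ : ℕ∞) A U) (m : ℕ) :
    ∀ V V' W : VF n, ContDiffOn ℝ (⊤ : ℕ∞) V U → ContDiffOn ℝ (⊤ : ℕ∞) V' U →
      ContDiffOn ℝ (⊤ : ℕ∞) W U → x ∈ U →
    genTorsion A m (fun y => V y + V' y) W x = genTorsion A m V W x + genTorsion A m V' W x := by
  induction m with
  | zero =>
    intro V V' W hV hV' hW hx
    exact lie_add₁ (dAt hU hV hx) (dAt hU hV' hx) (dAt hU hW hx)
  | succ m ih =>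
    intro V V' W hV hV' hW hx
    conv_lhs => rw [gt_succ]
    conv_rhs => rw [gt_succ A m V, gt_succ A m V']
    rw [opApp_add,
      ih V V' W hV hV' hW hx,
      ih V V' (opApp A W) hV hV' (sm_opApp hA hW) hx,
      ih (opApp A V) (opApp A V') W (sm_opApp hA hV) (sm_opApp hA hV') hW hx,
      ih (opApp A V) (opApp A V') (opApp A W) (sm_opApp hA hV) (sm_opApp hA hV')
        (sm_opApp hA hW) hx]
    simp only [map_add]
    abel

lemma gt_add₂ (hU : IsOpen U) (hA : ContDiffOn ℝ (⊤ : ℕ∞) A U) (m : ℕ) :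
    ∀ V W W' : VF n, ContDiffOn ℝ (⊤ : ℕ∞) V U → ContDiffOn ℝ (⊤ : ℕ∞) W U →
      ContDiffOn ℝ (⊤ : ℕ∞) W' U → x ∈ U →
    genTorsion A m V (fun y => W y + W' y) x = genTorsion A m V W x + genTorsion A m V W' x := by
  induction m with
  | zero =>
    intro V W W' hV hW hW' hx
    exact lie_add₂ (dAt hU hV hx) (dAt hU hW hx) (dAt hU hW' hx)
  | succ m ih =>
    intro V W W' hV hW hW' hx
    conv_lhs => rw [gt_succ]
    conv_rhs => rw [gt_succ A m V W, gt_succ A m V W']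
    rw [opApp_add,
      ih V W W' hV hW hW' hx,
      ih (opApp A V) W W' (sm_opApp hA hV) hW hW' hx,
      ih V (opApp A W) (opApp A W') hV (sm_opApp hA hW) (sm_opApp hA hW') hx,
      ih (opApp A V) (opApp A W) (opApp A W') (sm_opApp hA hV) (sm_opApp hA hW)
        (sm_opApp hA hW') hx]
    simp only [map_add]
    abel

lemma gt_zero₁ (hU : IsOpen U) (hA : ContDiffOn ℝ (⊤ : ℕ∞) A U) (m : ℕ) :
    ∀ W : VF n, ContDiffOn ℝ (⊤ : ℕ∞) W U → x ∈ U →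
    genTorsion A m (fun _ => 0) W x = 0 := by
  induction m with
  | zero =>
    intro W hW hx
    simp [genTorsion, lieBracket]
  | succ m ih =>
    intro W hW hx
    rw [gt_succ]
    rw [show opApp A (fun _ => (0 : Vec n)) = fun _ => (0 : Vec n) by funext y; simp [opApp]]
    rw [ih W hW hx, ih (opApp A W) (sm_opApp hA hW) hx]
    simp

lemma gt_zero₂ (hU : IsOpen U) (hA : ContDiffOn ℝ (⊤ : ℕ∞) A U) (m : ℕ) :
    ∀ V : VF n, ContDiffOn ℝ (⊤ : ℕ∞) V U → x ∈ U →
    genTorsion A m V (fun _ => 0) x = 0 := by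
  induction m with
  | zero =>
    intro V hV hx
    simp [genTorsion, lieBracket]
  | succ m ih =>
    intro V hV hx
    rw [gt_succ]
    rw [show opApp A (fun _ => (0 : Vec n)) = fun _ => (0 : Vec n) by funext y; simp [opApp]]
    rw [ih V hV hx, ih (opApp A V) (sm_opApp hA hV) hx]
    simp

lemma gt_smul₁ (hU : IsOpen U) (hA : ContDiffOn ℝ (⊤ : ℕ∞) A U) (m : ℕ) :
    ∀ (f : Vec n → ℝ) (V W : VF n), ContDiffOn ℝ (⊤ : ℕ∞) f U →
      ContDiffOn ℝ (⊤ : ℕ∞) V U → ContDiffOn ℝ (⊤ : ℕ∞) W U → x ∈ U →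
    genTorsion A (m+1) (fun y => f y • V y) W x = f x • genTorsion A (m+1) V W x := by
  induction m with
  | zero =>
    intro f V W hf hV hW hx
    simp only [genTorsion]
    rw [opApp_smul,
      lie_smul₁ (dAt hU hf hx) (dAt hU hV hx) (dAt hU hW hx),
      lie_smul₁ (dAt hU hf hx) (dAt hU (sm_opApp hA hV) hx) (dAt hU (sm_opApp hA hW) hx),
      lie_smul₁ (dAt hU hf hx) (dAt hU hV hx) (dAt hU (sm_opApp hA hW) hx),
      lie_smul₁ (dAt hU hf hx) (dAt hU (sm_opApp hA hV) hx) (dAt hU hW hx)]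
    simp only [opApp, map_sub, map_add, map_smul, smul_sub, smul_add]
    module
  | succ m ih =>
    intro f V W hf hV hW hx
    conv_lhs => rw [gt_succ]
    conv_rhs => rw [gt_succ]
    rw [opApp_smul,
      ih f V W hf hV hW hx,
      ih f V (opApp A W) hf hV (sm_opApp hA hW) hx,
      ih f (opApp A V) W hf (sm_opApp hA hV) hW hx,
      ih f (opApp A V) (opApp A W) hf (sm_opApp hA hV) (sm_opApp hA hW) hx]
    simp only [map_add, map_smul, smul_sub, smul_add]

lemma gt_smul₂ (hU : IsOpen U) (hA : ContDiffOn ℝ (⊤ : ℕ∞) A U) (m : ℕ) :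
    ∀ (f : Vec n → ℝ) (V W : VF n), ContDiffOn ℝ (⊤ : ℕ∞) f U →
      ContDiffOn ℝ (⊤ : ℕ∞) V U → ContDiffOn ℝ (⊤ : ℕ∞) W U → x ∈ U →
    genTorsion A (m+1) V (fun y => f y • W y) x = f x • genTorsion A (m+1) V W x := by
  induction m with
  | zero =>
    intro f V W hf hV hW hx
    simp only [genTorsion]
    rw [opApp_smul,
      lie_smul₂ (dAt hU hf hx) (dAt hU hV hx) (dAt hU hW hx),
      lie_smul₂ (dAt hU hf hx) (dAt hU (sm_opApp hA hV) hx) (dAt hU (sm_opApp hA hW) hx),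
      lie_smul₂ (dAt hU hf hx) (dAt hU hV hx) (dAt hU (sm_opApp hA hW) hx),
      lie_smul₂ (dAt hU hf hx) (dAt hU (sm_opApp hA hV) hx) (dAt hU hW hx)]
    simp only [opApp, map_sub, map_add, map_smul, smul_sub, smul_add]
    module
  | succ m ih =>
    intro f V W hf hV hW hx
    conv_lhs => rw [gt_succ]
    conv_rhs => rw [gt_succ]
    rw [opApp_smul,
      ih f V W hf hV hW hx,
      ih f (opApp A V) W hf (sm_opApp hA hV) hW hx,
      ih f V (opApp A W) hf hV (sm_opApp hA hW) hx,
      ih f (opApp A V) (opApp A W) hf (sm_opApp hA hV) (sm_opApp hA hW) hx]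
    simp only [map_add, map_smul, smul_sub, smul_add]

lemma gt_csum₁ (hU : IsOpen U) (hA : ContDiffOn ℝ (⊤ : ℕ∞) A U) (m : ℕ) {ι : Type*} (s : Finset ι)
    (f : ι → Vec n → ℝ) (F : ι → VF n) (W : VF n)
    (hf : ∀ i ∈ s, ContDiffOn ℝ (⊤ : ℕ∞) (f i) U)
    (hF : ∀ i ∈ s, ContDiffOn ℝ (⊤ : ℕ∞) (F i) U)
    (hW : ContDiffOn ℝ (⊤ : ℕ∞) W U) (hx : x ∈ U) :
    genTorsion A (m+1) (fun y => ∑ i ∈ s, f i y • F i y) W x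
      = ∑ i ∈ s, f i x • genTorsion A (m+1) (F i) W x := by
  classical
  induction s using Finset.induction_on with
  | empty => simpa using gt_zero₁ hU hA (m+1) W hW hx
  | insert a s' hnot ih =>
    have h1 : ContDiffOn ℝ (⊤ : ℕ∞) (fun y => f a y • F a y) U :=
      sm_smul (hf a (mem_insert_self a s')) (hF a (mem_insert_self a s'))
    have h2 : ContDiffOn ℝ (⊤ : ℕ∞) (fun y => ∑ i ∈ s', f i y • F i y) U :=
      sm_sum s' fun i hi => sm_smul (hf i (mem_insert_of_mem hi)) (hF i (mem_insert_of_mem hi))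
    rw [show (fun y => ∑ i ∈ insert a s', f i y • F i y)
        = fun y => f a y • F a y + ∑ i ∈ s', f i y • F i y by
      funext y; rw [Finset.sum_insert hnot],
      gt_add₁ hU hA (m+1) _ _ W h1 h2 hW hx,
      gt_smul₁ hU hA m (f a) (F a) W (hf a (mem_insert_self a s'))
        (hF a (mem_insert_self a s')) hW hx,
      ih (fun i hi => hf i (mem_insert_of_mem hi)) (fun i hi => hF i (mem_insert_of_mem hi)),
      Finset.sum_insert hnot]

lemma gt_csum₂ (hU : IsOpen U) (hA : ContDiffOn ℝ (⊤ : ℕ∞) A U) (m : ℕ) {ι : Type*} (s : Finset ι)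
    (f : ι → Vec n → ℝ) (F : ι → VF n) (V : VF n)
    (hf : ∀ i ∈ s, ContDiffOn ℝ (⊤ : ℕ∞) (f i) U)
    (hF : ∀ i ∈ s, ContDiffOn ℝ (⊤ : ℕ∞) (F i) U)
    (hV : ContDiffOn ℝ (⊤ : ℕ∞) V U) (hx : x ∈ U) :
    genTorsion A (m+1) V (fun y => ∑ i ∈ s, f i y • F i y) x
      = ∑ i ∈ s, f i x • genTorsion A (m+1) V (F i) x := by
  classical
  induction s using Finset.induction_on with
  | empty => simpa using gt_zero₂ hU hA (m+1) V hV hx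
  | insert a s' hnot ih =>
    have h1 : ContDiffOn ℝ (⊤ : ℕ∞) (fun y => f a y • F a y) U :=
      sm_smul (hf a (mem_insert_self a s')) (hF a (mem_insert_self a s'))
    have h2 : ContDiffOn ℝ (⊤ : ℕ∞) (fun y => ∑ i ∈ s', f i y • F i y) U :=
      sm_sum s' fun i hi => sm_smul (hf i (mem_insert_of_mem hi)) (hF i (mem_insert_of_mem hi))
    rw [show (fun y => ∑ i ∈ insert a s', f i y • F i y)
        = fun y => f a y • F a y + ∑ i ∈ s', f i y • F i y by
      funext y; rw [Finset.sum_insert hnot],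
      gt_add₂ hU hA (m+1) V _ _ hV h1 h2 hx,
      gt_smul₂ hU hA m (f a) V (F a) (hf a (mem_insert_self a s'))
        hV (hF a (mem_insert_self a s')) hx,
      ih (fun i hi => hf i (mem_insert_of_mem hi)) (fun i hi => hF i (mem_insert_of_mem hi)),
      Finset.sum_insert hnot]

end GT


section RepM

variable {A : OpField n} {T : VF n → VF n → VF n} {V W : VF n} {x : Vec n}

lemma repHom_X0k (k : ℕ) (S : MvPolynomial (Fin 3) (Vec n → ℝ)) :
    repHom A T V W x (X 0 ^ k * S) = (A x ^ k) (repHom A T V W x S) := by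
  induction S using MvPolynomial.induction_on' with
  | add p q ihp ihq => simp [mul_add, map_add, ihp, ihq]
  | monomial d s =>
    rw [X_pow_eq_monomial, monomial_mul, one_mul, repHom_monomial, repHom_monomial, map_smul]
    congr 1
    simp only [phiFn, Finsupp.add_apply, Finsupp.single_apply]
    simp
    rw [Function.iterate_add_apply]

lemma repHom_X1k (k : ℕ) (S : MvPolynomial (Fin 3) (Vec n → ℝ)) :
    repHom A T V W x (X 1 ^ k * S) = repHom A T (apow A k V) W x S := by
  induction S using MvPolynomial.induction_on' with
  | add p q ihp ihq => simp [mul_add, map_add, ihp, ihq]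
  | monomial d s =>
    rw [X_pow_eq_monomial, monomial_mul, one_mul, repHom_monomial, repHom_monomial]
    congr 1
    simp only [phiFn, apow, Finsupp.add_apply, Finsupp.single_apply]
    simp
    simp only [← Function.iterate_add_apply, add_comm]

lemma repHom_X2k (k : ℕ) (S : MvPolynomial (Fin 3) (Vec n → ℝ)) :
    repHom A T V W x (X 2 ^ k * S) = repHom A T V (apow A k W) x S := by
  induction S using MvPolynomial.induction_on' with
  | add p q ihp ihq => simp [mul_add, map_add, ihp, ihq]
  | monomial d s =>
    rw [X_pow_eq_monomial, monomial_mul, one_mul, repHom_monomial, repHom_monomial]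
    congr 1
    simp only [phiFn, apow, Finsupp.add_apply, Finsupp.single_apply]
    simp
    simp only [← Function.iterate_add_apply, add_comm]

lemma repHom_Cf (f : Vec n → ℝ) (S : MvPolynomial (Fin 3) (Vec n → ℝ)) :
    repHom A T V W x (C f * S) = f x • repHom A T V W x S := by
  induction S using MvPolynomial.induction_on' with
  | add p q ihp ihq => simp [mul_add, map_add, ihp, ihq, smul_add]
  | monomial d s =>
    rw [C_mul_monomial, repHom_monomial, repHom_monomial, Pi.mul_apply, mul_smul]

lemma repHom_one : repHom A T V W x 1 = T V W x := by
  rw [show (1 : MvPolynomial (Fin 3) (Vec n → ℝ)) = monomial 0 1 by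
    rw [← MvPolynomial.C_1]; rfl, repHom_monomial]
  simp [phiFn]

lemma phi_succ (A : OpField n) (m : ℕ) (V W : VF n) (x : Vec n) (d : Fin 3 →₀ ℕ) :
    phiFn A (genTorsion A (m+1)) V W x d
      = phiFn A (genTorsion A m) V W x (Finsupp.single 0 1 + (Finsupp.single 0 1 + d))
        + phiFn A (genTorsion A m) V W x (Finsupp.single 1 1 + (Finsupp.single 2 1 + d))
        - (phiFn A (genTorsion A m) V W x (Finsupp.single 0 1 + (Finsupp.single 2 1 + d))
           + phiFn A (genTorsion A m) V W x (Finsupp.single 1 1 + (Finsupp.single 0 1 + d))) := by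
  have hpow : ∀ (j : ℕ) (u : Vec n), (A x ^ (1 + j)) u = A x ((A x ^ j) u) := fun j u => by
    rw [pow_add, pow_one, ContinuousLinearMap.mul_apply]
  have hcomm : ∀ (j : ℕ) (u : Vec n), (A x ^ j) (A x u) = A x ((A x ^ j) u) := fun j u => by
    rw [← ContinuousLinearMap.mul_apply, ← ContinuousLinearMap.mul_apply, ← pow_succ, ← pow_succ']
  simp only [phiFn, Finsupp.add_apply, Finsupp.single_apply]
  simp only [Fin.isValue, show ((0:Fin 3) = 2) = False by simp, show ((2:Fin 3) = 0) = False by simp,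
    show ((2:Fin 3) = 1) = False by simp, show ((1:Fin 3) = 2) = False by simp,
    show ((0:Fin 3) = 0) = True by simp, show ((1:Fin 3) = 1) = True by simp,
    show ((2:Fin 3) = 2) = True by simp, show ((0:Fin 3) = 1) = False by simp,
    show ((1:Fin 3) = 0) = False by simp, if_true, if_false, zero_add]
  rw [gt_succ]
  rw [show (fun y => (A y ^ (1 + d 1)) (V y)) = opApp A (fun y => (A y ^ d 1) (V y)) by
    funext y; rw [opApp, pow_add, pow_one, ContinuousLinearMap.mul_apply]]
  rw [show (fun y => (A y ^ (1 + d 2)) (W y)) = opApp A (fun y => (A y ^ d 2) (W y)) by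
    funext y; rw [opApp, pow_add, pow_one, ContinuousLinearMap.mul_apply]]
  simp only [hpow, hcomm, map_add, map_sub]

lemma repHom_step (A : OpField n) (m : ℕ) (V W : VF n) (x : Vec n)
    (S : MvPolynomial (Fin 3) (Vec n → ℝ)) :
    repHom A (genTorsion A (m+1)) V W x S
      = repHom A (genTorsion A m) V W x ((X 0 - X 1) * ((X 0 - X 2) * S)) := by
  induction S using MvPolynomial.induction_on' with
  | add p q ihp ihq => rw [mul_add, mul_add, map_add, map_add, ihp, ihq]
  | monomial d s =>
    have e : (X 0 - X 1) * ((X 0 - X 2) * (monomial d) s)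
        = ((monomial (Finsupp.single 0 1 + (Finsupp.single 0 1 + d)) s
            + monomial (Finsupp.single 1 1 + (Finsupp.single 2 1 + d)) s)
           - (monomial (Finsupp.single 0 1 + (Finsupp.single 2 1 + d)) s
              + monomial (Finsupp.single 1 1 + (Finsupp.single 0 1 + d)) s)) := by
      simp only [sub_mul, mul_sub, MvPolynomial.X, monomial_mul, one_mul]
      abel
    rw [repHom_monomial, e, map_sub, map_add, map_add, repHom_monomial, repHom_monomial,
      repHom_monomial, repHom_monomial, phi_succ, smul_sub, smul_add, smul_add]

end RepM


section PolyM

variable {A : OpField n} {T : VF n → VF n → VF n} {V W : VF n} {x : Vec n} {U : Set (Vec n)}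

/-- P(Xᵥ) as a polynomial. -/
noncomputable def Pv (c : ℕ → Vec n → ℝ) (N : ℕ) (v : Fin 3) :
    MvPolynomial (Fin 3) (Vec n → ℝ) :=
  ∑ k ∈ Finset.range (N+1), C (c k) * X v ^ k

lemma bezout (c : ℕ → Vec n → ℝ) (N : ℕ) (v : Fin 3) :
    (X 0 - X v) * bezoutQ c N v = Pv c N 0 - Pv c N v := by
  rw [bezoutQ, Finset.mul_sum]
  have h1 : ∀ k ∈ Finset.Icc 1 N,
      (X 0 - X v) * (C (c k) * ∑ p ∈ Finset.range k, X 0 ^ p * X v ^ (k-1-p))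
        = C (c k) * (X (0 : Fin 3) ^ k - X v ^ k) := by
    intro k _
    rw [mul_left_comm]
    congr 1
    rw [mul_comm]
    exact geom_sum₂_mul (X 0) (X v) k
  rw [Finset.sum_congr rfl h1]
  have h2 : ∑ k ∈ Finset.Icc 1 N, C (c k) * (X (0 : Fin 3) ^ k - X v ^ k)
      = ∑ k ∈ Finset.range (N+1), C (c k) * (X (0 : Fin 3) ^ k - X v ^ k) := by
    apply Finset.sum_subset
    · intro k hk
      rw [Finset.mem_Icc] at hk
      exact Finset.mem_range.mpr (by omega)
    · intro k hk hk'
      have hkr := Finset.mem_range.mp hk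
      have hk0 : k = 0 := by
        rcases Nat.eq_zero_or_pos k with h | h
        · exact h
        · exact absurd (Finset.mem_Icc.mpr ⟨h, by omega⟩) hk'
      subst hk0; simp
  rw [h2, Pv, Pv, ← Finset.sum_sub_distrib]
  exact Finset.sum_congr rfl fun k _ => by ring

lemma repHom_P0 (c : ℕ → Vec n → ℝ) (N : ℕ) (S : MvPolynomial (Fin 3) (Vec n → ℝ)) :
    repHom A T V W x (Pv c N 0 * S) = polyOp A c N x (repHom A T V W x S) := by
  rw [Pv, Finset.sum_mul, map_sum]
  simp only [mul_assoc, repHom_Cf, repHom_X0k]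
  rw [polyOp, ContinuousLinearMap.sum_apply]
  simp [ContinuousLinearMap.smul_apply]

lemma repHom_P1 (hU : IsOpen U) (hA : ContDiffOn ℝ (⊤ : ℕ∞) A U)
    {c : ℕ → Vec n → ℝ} (hc : ∀ k, ContDiffOn ℝ (⊤ : ℕ∞) (c k) U) (N : ℕ) (m : ℕ)
    (hV : ContDiffOn ℝ (⊤ : ℕ∞) V U) (hW : ContDiffOn ℝ (⊤ : ℕ∞) W U) (hx : x ∈ U)
    (S : MvPolynomial (Fin 3) (Vec n → ℝ)) :
    repHom A (genTorsion A (m+1)) V W x (Pv c N 1 * S)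
      = repHom A (genTorsion A (m+1)) (opApp (polyOp A c N) V) W x S := by
  induction S using MvPolynomial.induction_on' with
  | add p q ihp ihq => rw [mul_add, map_add, map_add, ihp, ihq]
  | monomial d s =>
    have hfield : (fun y => (A y ^ d 1) (opApp (polyOp A c N) V y))
        = (fun y => ∑ k ∈ Finset.range (N+1), c k y • apow A (d 1 + k) V y) := by
      funext y
      rw [opApp, polyOp, ContinuousLinearMap.sum_apply, map_sum]
      refine Finset.sum_congr rfl fun k _ => ?_
      rw [ContinuousLinearMap.smul_apply, map_smul, apow, pow_add,
        ContinuousLinearMap.mul_apply]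
    have hfld2 : ∀ k : ℕ, (fun y => (A y ^ d 1) (apow A k V y)) = apow A (d 1 + k) V :=
      fun k => by
        funext y
        rw [apow, apow, pow_add, ContinuousLinearMap.mul_apply]
    have hW' : ContDiffOn ℝ (⊤ : ℕ∞) (fun y => (A y ^ d 2) (W y)) U := sm_apow hA (d 2) hW
    rw [Pv, Finset.sum_mul, map_sum]
    simp only [mul_assoc, repHom_Cf, repHom_X1k, repHom_monomial]
    simp only [phiFn]
    rw [hfield,
      gt_csum₁ hU hA m (Finset.range (N+1)) (fun k => c k) (fun k => apow A (d 1 + k) V) _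
        (fun k _ => hc k) (fun k _ => sm_apow hA _ hV) hW' hx]
    simp only [hfld2, map_sum, map_smul, Finset.smul_sum, smul_smul]
    exact Finset.sum_congr rfl fun k _ => by rw [mul_comm]

lemma repHom_P2 (hU : IsOpen U) (hA : ContDiffOn ℝ (⊤ : ℕ∞) A U)
    {c : ℕ → Vec n → ℝ} (hc : ∀ k, ContDiffOn ℝ (⊤ : ℕ∞) (c k) U) (N : ℕ) (m : ℕ)
    (hV : ContDiffOn ℝ (⊤ : ℕ∞) V U) (hW : ContDiffOn ℝ (⊤ : ℕ∞) W U) (hx : x ∈ U)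
    (S : MvPolynomial (Fin 3) (Vec n → ℝ)) :
    repHom A (genTorsion A (m+1)) V W x (Pv c N 2 * S)
      = repHom A (genTorsion A (m+1)) V (opApp (polyOp A c N) W) x S := by
  induction S using MvPolynomial.induction_on' with
  | add p q ihp ihq => rw [mul_add, map_add, map_add, ihp, ihq]
  | monomial d s =>
    have hfield : (fun y => (A y ^ d 2) (opApp (polyOp A c N) W y))
        = (fun y => ∑ k ∈ Finset.range (N+1), c k y • apow A (d 2 + k) W y) := by
      funext y
      rw [opApp, polyOp, ContinuousLinearMap.sum_apply, map_sum]
      refine Finset.sum_congr rfl fun k _ => ?_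
      rw [ContinuousLinearMap.smul_apply, map_smul, apow, pow_add,
        ContinuousLinearMap.mul_apply]
    have hfld2 : ∀ k : ℕ, (fun y => (A y ^ d 2) (apow A k W y)) = apow A (d 2 + k) W :=
      fun k => by
        funext y
        rw [apow, apow, pow_add, ContinuousLinearMap.mul_apply]
    have hV' : ContDiffOn ℝ (⊤ : ℕ∞) (fun y => (A y ^ d 1) (V y)) U := sm_apow hA (d 1) hV
    rw [Pv, Finset.sum_mul, map_sum]
    simp only [mul_assoc, repHom_Cf, repHom_X2k, repHom_monomial]
    simp only [phiFn]
    rw [hfield,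
      gt_csum₂ hU hA m (Finset.range (N+1)) (fun k => c k) (fun k => apow A (d 2 + k) W) _
        (fun k _ => hc k) (fun k _ => sm_apow hA _ hW) hV' hx]
    simp only [hfld2, map_sum, map_smul, Finset.smul_sum, smul_smul]
    exact Finset.sum_congr rfl fun k _ => by rw [mul_comm]

lemma main_step (hU : IsOpen U) (hA : ContDiffOn ℝ (⊤ : ℕ∞) A U)
    {c : ℕ → Vec n → ℝ} (hc : ∀ k, ContDiffOn ℝ (⊤ : ℕ∞) (c k) U) (N : ℕ) (m : ℕ)
    (hV : ContDiffOn ℝ (⊤ : ℕ∞) V U) (hW : ContDiffOn ℝ (⊤ : ℕ∞) W U) (hx : x ∈ U)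
    (S : MvPolynomial (Fin 3) (Vec n → ℝ)) :
    polyOp A c N x (polyOp A c N x (repHom A (genTorsion A (m+1)) V W x S))
      + repHom A (genTorsion A (m+1)) (opApp (polyOp A c N) V) (opApp (polyOp A c N) W) x S
      - polyOp A c N x (repHom A (genTorsion A (m+1)) V (opApp (polyOp A c N) W) x S
          + repHom A (genTorsion A (m+1)) (opApp (polyOp A c N) V) W x S)
    = repHom A (genTorsion A (m+1+1)) V W x (bezoutQ c N 1 * (bezoutQ c N 2 * S)) := by
  have hBV := sm_opApp (sm_polyOp hA hc N) hV
  have hBW := sm_opApp (sm_polyOp hA hc N) hW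
  rw [← repHom_P2 hU hA hc N m hBV hW hx S,
      ← repHom_P1 hU hA hc N m hV hW hx (Pv c N 2 * S),
      ← repHom_P2 hU hA hc N m hV hW hx S,
      ← repHom_P1 hU hA hc N m hV hW hx S,
      ← repHom_P0 c N S, ← repHom_P0 c N (Pv c N 0 * S),
      map_add (polyOp A c N x),
      ← repHom_P0 c N (Pv c N 2 * S), ← repHom_P0 c N (Pv c N 1 * S),
      ← map_add (repHom A (genTorsion A (m+1)) V W x),
      ← map_add (repHom A (genTorsion A (m+1)) V W x), ← map_sub,
      repHom_step A (m+1) V W x (bezoutQ c N 1 * (bezoutQ c N 2 * S))]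
  congr 1
  have b1 := bezout c N 1
  have b2 := bezout c N 2
  linear_combination (-((Pv c N 0 - Pv c N 2) * S)) * b1
    + (-((X 0 - X 1) * bezoutQ c N 1 * S)) * b2

end PolyM


section Level1

variable {A : OpField n} {V W : VF n} {x : Vec n} {U : Set (Vec n)}

lemma gt_zero_def (A : OpField n) (V W : VF n) : genTorsion A 0 V W = lieBracket V W := rfl

lemma Bsum (A : OpField n) (c : ℕ → Vec n → ℝ) (N : ℕ) (x : Vec n) (u : Vec n) :
    polyOp A c N x u = ∑ k ∈ Finset.range (N+1), c k x • (A x ^ k) u := by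
  rw [polyOp, ContinuousLinearMap.sum_apply]
  exact Finset.sum_congr rfl fun k _ => rfl

lemma pow_polyOp_comm (A : OpField n) (c : ℕ → Vec n → ℝ) (N : ℕ) (x : Vec n) (j : ℕ)
    (u : Vec n) :
    (A x ^ j) (polyOp A c N x u) = polyOp A c N x ((A x ^ j) u) := by
  rw [Bsum, Bsum, map_sum]
  refine Finset.sum_congr rfl fun k _ => ?_
  rw [map_smul, ← ContinuousLinearMap.mul_apply, ← ContinuousLinearMap.mul_apply,
    ← pow_add, ← pow_add, add_comm]

/-- Half of the error term. -/
noncomputable def Fbar (A : OpField n) (c : ℕ → Vec n → ℝ) (N : ℕ) (x : Vec n)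
    (v w : Vec n) : Vec n :=
  ∑ k ∈ Finset.range (N+1), ∑ l ∈ Finset.range (N+1),
    ((c k x * fderiv ℝ (c l) x ((A x ^ k) v)) • (A x ^ l) w
      - (c k x * fderiv ℝ (c l) x v) • (A x ^ (k+l)) w)

/-- The error term at level 1. -/
noncomputable def Ebar (A : OpField n) (c : ℕ → Vec n → ℝ) (N : ℕ) (x : Vec n)
    (v w : Vec n) : Vec n :=
  Fbar A c N x v w - Fbar A c N x w v

lemma Fbar_B2 (A : OpField n) (c : ℕ → Vec n → ℝ) (N : ℕ) (x : Vec n) (v w : Vec n) :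
    Fbar A c N x v (polyOp A c N x w) = polyOp A c N x (Fbar A c N x v w) := by
  simp only [Fbar, map_sum, map_sub, map_smul, pow_polyOp_comm]

lemma err_cancel (A : OpField n) (c : ℕ → Vec n → ℝ) (N : ℕ) (x : Vec n) (v w : Vec n) :
    polyOp A c N x (polyOp A c N x (Ebar A c N x v w))
      + Ebar A c N x (polyOp A c N x v) (polyOp A c N x w)
      - polyOp A c N x (Ebar A c N x v (polyOp A c N x w)
          + Ebar A c N x (polyOp A c N x v) w) = 0 := by
  simp only [Ebar, Fbar_B2, map_sub, map_add]
  abel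

lemma opApp_poly (A : OpField n) (c : ℕ → Vec n → ℝ) (N : ℕ) (V : VF n) :
    opApp (polyOp A c N) V = fun y => ∑ k ∈ Finset.range (N+1), c k y • apow A k V y := by
  funext y
  rw [opApp, Bsum]
  exact Finset.sum_congr rfl fun k _ => rfl

lemma bp1 (hU : IsOpen U) (hA : ContDiffOn ℝ (⊤ : ℕ∞) A U)
    {c : ℕ → Vec n → ℝ} (hc : ∀ k, ContDiffOn ℝ (⊤ : ℕ∞) (c k) U) {N : ℕ}
    (hV : ContDiffOn ℝ (⊤ : ℕ∞) V U) {W' : VF n} (hW' : DifferentiableAt ℝ W' x)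
    (hx : x ∈ U) :
    lieBracket (opApp (polyOp A c N) V) W' x
      = ∑ k ∈ Finset.range (N+1),
          (c k x • lieBracket (apow A k V) W' x
            - (fderiv ℝ (c k) x (W' x)) • apow A k V x) := by
  rw [opApp_poly,
    lie_sum₁ (Finset.range (N+1)) (F := fun k => fun y => c k y • apow A k V y)
      (fun k _ => (dAt hU (hc k) hx).smul (dAt hU (sm_apow hA k hV) hx)) hW']
  exact Finset.sum_congr rfl fun k _ =>
    lie_smul₁ (dAt hU (hc k) hx) (dAt hU (sm_apow hA k hV) hx) hW'

lemma bp2 (hU : IsOpen U) (hA : ContDiffOn ℝ (⊤ : ℕ∞) A U)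
    {c : ℕ → Vec n → ℝ} (hc : ∀ k, ContDiffOn ℝ (⊤ : ℕ∞) (c k) U) {N : ℕ}
    (hW : ContDiffOn ℝ (⊤ : ℕ∞) W U) {V' : VF n} (hV' : DifferentiableAt ℝ V' x)
    (hx : x ∈ U) :
    lieBracket V' (opApp (polyOp A c N) W) x
      = ∑ l ∈ Finset.range (N+1),
          (c l x • lieBracket V' (apow A l W) x
            + (fderiv ℝ (c l) x (V' x)) • apow A l W x) := by
  rw [opApp_poly,
    lie_sum₂ (Finset.range (N+1)) (F := fun l => fun y => c l y • apow A l W y)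
      (fun l _ => (dAt hU (hc l) hx).smul (dAt hU (sm_apow hA l hW) hx)) hV']
  exact Finset.sum_congr rfl fun l _ =>
    lie_smul₂ (dAt hU (hc l) hx) hV' (dAt hU (sm_apow hA l hW) hx)

lemma MT (A : OpField n) (c : ℕ → Vec n → ℝ) (N : ℕ) (V W : VF n) (x : Vec n) :
    repHom A (genTorsion A 1) V W x (bezoutQ c N 1 * (bezoutQ c N 2 * 1))
      = ∑ k ∈ Finset.range (N+1), ∑ l ∈ Finset.range (N+1),
          ((c k x * c l x) • (A x ^ (k+l)) (lieBracket V W x)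
            + (c k x * c l x) • lieBracket (apow A k V) (apow A l W) x
            - (c k x * c l x) • (A x ^ k) (lieBracket V (apow A l W) x)
            - (c k x * c l x) • (A x ^ l) (lieBracket (apow A k V) W x)) := by
  rw [show genTorsion A 1 = genTorsion A (0+1) from rfl, repHom_step A 0 V W x]
  have b1 := bezout c N 1
  have b2 := bezout c N 2
  rw [show (X 0 - X 1) * ((X 0 - X 2) * (bezoutQ c N 1 * (bezoutQ c N 2 * 1)))
      = (Pv c N 0 - Pv c N 1) * (Pv c N 0 - Pv c N 2) by
    linear_combination ((X 0 - X 2) * bezoutQ c N 2) * b1 + (Pv c N 0 - Pv c N 1) * b2]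
  rw [show (Pv c N 0 - Pv c N 1) * (Pv c N 0 - Pv c N 2)
      = ∑ k ∈ Finset.range (N+1), ∑ l ∈ Finset.range (N+1),
          (C (c k) * (C (c l) * ((X 0 ^ k * (X 0 ^ l * 1) + X 1 ^ k * (X 2 ^ l * 1))
            - (X 0 ^ k * (X 2 ^ l * 1) + X 1 ^ k * (X 0 ^ l * 1))))) by
    rw [Pv, Pv, Pv, ← Finset.sum_sub_distrib, ← Finset.sum_sub_distrib, Finset.sum_mul_sum]
    exact Finset.sum_congr rfl fun k _ => Finset.sum_congr rfl fun l _ => by ring]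
  rw [map_sum]
  refine Finset.sum_congr rfl fun k _ => ?_
  rw [map_sum]
  refine Finset.sum_congr rfl fun l _ => ?_
  rw [repHom_Cf, repHom_Cf, map_sub, map_add, map_add,
    repHom_X0k, repHom_X0k, repHom_one,
    repHom_X1k, repHom_X2k, repHom_one,
    repHom_X0k, repHom_X2k, repHom_one,
    repHom_X1k, repHom_X0k, repHom_one]
  simp only [gt_zero_def, smul_sub, smul_add, smul_smul,
    ← ContinuousLinearMap.mul_apply, ← pow_add]
  abel

lemma level1 (hU : IsOpen U) (hA : ContDiffOn ℝ (⊤ : ℕ∞) A U)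
    {c : ℕ → Vec n → ℝ} (hc : ∀ k, ContDiffOn ℝ (⊤ : ℕ∞) (c k) U) (N : ℕ)
    (hV : ContDiffOn ℝ (⊤ : ℕ∞) V U) (hW : ContDiffOn ℝ (⊤ : ℕ∞) W U) (hx : x ∈ U) :
    genTorsion (polyOp A c N) 1 V W x
      = repHom A (genTorsion A 1) V W x (bezoutQ c N 1 * (bezoutQ c N 2 * 1))
        + Ebar A c N x (V x) (W x) := by
  have hB := sm_polyOp hA hc N
  have hBV := sm_opApp hB hV
  have hBW := sm_opApp hB hW
  have hdBW : DifferentiableAt ℝ (opApp (polyOp A c N) W) x := dAt hU hBW hx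
  have hdW : DifferentiableAt ℝ W x := dAt hU hW hx
  have hT1 : polyOp A c N x (polyOp A c N x (lieBracket V W x))
      = ∑ k ∈ Finset.range (N+1), ∑ l ∈ Finset.range (N+1),
          (c k x * c l x) • (A x ^ (k+l)) (lieBracket V W x) := by
    simp only [Bsum A c N x, map_sum, map_smul, Finset.smul_sum, smul_smul,
      ← ContinuousLinearMap.mul_apply, ← pow_add]
  have hT3 : polyOp A c N x (lieBracket V (opApp (polyOp A c N) W) x)
      = ∑ k ∈ Finset.range (N+1), ∑ l ∈ Finset.range (N+1),
          ((c k x * c l x) • (A x ^ k) (lieBracket V (apow A l W) x)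
            + (c k x * fderiv ℝ (c l) x (V x)) • (A x ^ (k+l)) (W x)) := by
    rw [bp2 hU hA hc hW (dAt hU hV hx) hx, Bsum]
    simp only [map_sum, map_add, map_smul, Finset.smul_sum, smul_smul, smul_add, apow,
      ← ContinuousLinearMap.mul_apply, ← pow_add]
  have hT4 : polyOp A c N x (lieBracket (opApp (polyOp A c N) V) W x)
      = ∑ k ∈ Finset.range (N+1), ∑ l ∈ Finset.range (N+1),
          ((c k x * c l x) • (A x ^ k) (lieBracket (apow A l V) W x)
            - (c k x * fderiv ℝ (c l) x (W x)) • (A x ^ (k+l)) (V x)) := by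
    rw [bp1 hU hA hc hV hdW hx, Bsum]
    simp only [map_sum, map_sub, map_smul, Finset.smul_sum, smul_smul, smul_sub, apow,
      ← ContinuousLinearMap.mul_apply, ← pow_add]
  have hT2 : lieBracket (opApp (polyOp A c N) V) (opApp (polyOp A c N) W) x
      = ∑ k ∈ Finset.range (N+1), ∑ l ∈ Finset.range (N+1),
          ((c k x * c l x) • lieBracket (apow A k V) (apow A l W) x
            + (c k x * fderiv ℝ (c l) x ((A x ^ k) (V x))) • (A x ^ l) (W x)
            - (c l x * fderiv ℝ (c k) x ((A x ^ l) (W x))) • (A x ^ k) (V x)) := by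
    rw [bp1 hU hA hc hV hdBW hx]
    have e1 : ∀ k, lieBracket (apow A k V) (opApp (polyOp A c N) W) x
        = ∑ l ∈ Finset.range (N+1),
            (c l x • lieBracket (apow A k V) (apow A l W) x
              + (fderiv ℝ (c l) x (apow A k V x)) • apow A l W x) :=
      fun k => bp2 hU hA hc hW (dAt hU (sm_apow hA k hV) hx) hx
    have e2 : opApp (polyOp A c N) W x
        = ∑ l ∈ Finset.range (N+1), c l x • (A x ^ l) (W x) := Bsum A c N x (W x)
    simp only [e1, e2, map_sum, map_smul, smul_eq_mul, Finset.smul_sum, Finset.sum_smul,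
      smul_add, smul_smul, apow, ← Finset.sum_sub_distrib]
  rw [show genTorsion (polyOp A c N) 1 V W x
      = polyOp A c N x (polyOp A c N x (genTorsion (polyOp A c N) 0 V W x))
        + genTorsion (polyOp A c N) 0 (opApp (polyOp A c N) V) (opApp (polyOp A c N) W) x
        - polyOp A c N x (genTorsion (polyOp A c N) 0 V (opApp (polyOp A c N) W) x
            + genTorsion (polyOp A c N) 0 (opApp (polyOp A c N) V) W x)
      from gt_succ _ 0 V W x]
  simp only [gt_zero_def]
  rw [map_add (polyOp A c N x), hT1, hT2, hT3, hT4, MT A c N V W x, Ebar, Fbar, Fbar]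
  have swap : ∑ k ∈ Finset.range (N+1), ∑ l ∈ Finset.range (N+1),
        (c k x * c l x) • (A x ^ k) (lieBracket (apow A l V) W x)
      = ∑ k ∈ Finset.range (N+1), ∑ l ∈ Finset.range (N+1),
        (c k x * c l x) • (A x ^ l) (lieBracket (apow A k V) W x) := by
    rw [Finset.sum_comm]
    exact Finset.sum_congr rfl fun l _ => Finset.sum_congr rfl fun k _ => by rw [mul_comm]
  have swap2 : ∑ k ∈ Finset.range (N+1), ∑ l ∈ Finset.range (N+1),
        (c l x * fderiv ℝ (c k) x ((A x ^ l) (W x))) • (A x ^ k) (V x)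
      = ∑ k ∈ Finset.range (N+1), ∑ l ∈ Finset.range (N+1),
        (c k x * fderiv ℝ (c l) x ((A x ^ k) (W x))) • (A x ^ l) (V x) := by
    rw [Finset.sum_comm]
  simp only [Finset.sum_add_distrib, Finset.sum_sub_distrib]
  rw [swap, swap2]
  abel

end Level1


section Final

variable {A : OpField n} {V W : VF n} {x : Vec n} {U : Set (Vec n)}

lemma main_step' (hU : IsOpen U) (hA : ContDiffOn ℝ (⊤ : ℕ∞) A U)
    {c : ℕ → Vec n → ℝ} (hc : ∀ k, ContDiffOn ℝ (⊤ : ℕ∞) (c k) U) (N : ℕ)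
    (L : ℕ) (hL : 1 ≤ L)
    (hV : ContDiffOn ℝ (⊤ : ℕ∞) V U) (hW : ContDiffOn ℝ (⊤ : ℕ∞) W U) (hx : x ∈ U)
    (S : MvPolynomial (Fin 3) (Vec n → ℝ)) :
    polyOp A c N x (polyOp A c N x (repHom A (genTorsion A L) V W x S))
      + repHom A (genTorsion A L) (opApp (polyOp A c N) V) (opApp (polyOp A c N) W) x S
      - polyOp A c N x (repHom A (genTorsion A L) V (opApp (polyOp A c N) W) x S
          + repHom A (genTorsion A L) (opApp (polyOp A c N) V) W x S)
    = repHom A (genTorsion A (L+1)) V W x (bezoutQ c N 1 * (bezoutQ c N 2 * S)) := by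
  obtain ⟨m, rfl⟩ : ∃ m, L = m + 1 := ⟨L - 1, by omega⟩
  exact main_step hU hA hc N m hV hW hx S

lemma key (B : Vec n →L[ℝ] Vec n) (r1 r2 r3 r4 e1 e2 e3 e4 R : Vec n)
    (h1 : B (B r1) + r2 - B (r3 + r4) = R)
    (h2 : B (B e1) + e2 - B (e3 + e4) = 0) :
    B (B (r1 + e1)) + (r2 + e2) - B ((r3 + e3) + (r4 + e4)) = R := by
  calc B (B (r1 + e1)) + (r2 + e2) - B ((r3 + e3) + (r4 + e4))
      = (B (B r1) + r2 - B (r3 + r4)) + (B (B e1) + e2 - B (e3 + e4)) := by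
        simp only [map_add]; abel
    _ = R + 0 := by rw [h1, h2]
    _ = R := add_zero R

lemma mainlemma (hU : IsOpen U) (hA : ContDiffOn ℝ (⊤ : ℕ∞) A U)
    {c : ℕ → Vec n → ℝ} (hc : ∀ k, ContDiffOn ℝ (⊤ : ℕ∞) (c k) U) (N : ℕ) (j : ℕ) :
    ∀ V W : VF n, ContDiffOn ℝ (⊤ : ℕ∞) V U → ContDiffOn ℝ (⊤ : ℕ∞) W U →
      ∀ x ∈ U,
      genTorsion (polyOp A c N) (j+2) V W x
        = repHom A (genTorsion A (j+2)) V W x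
            (bezoutQ c N 1 ^ (j+2) * bezoutQ c N 2 ^ (j+2)) := by
  induction j with
  | zero =>
    intro V W hV hW x hx
    have hB := sm_polyOp hA hc N
    have hBV := sm_opApp hB hV
    have hBW := sm_opApp hB hW
    rw [show genTorsion (polyOp A c N) 2 V W x
        = polyOp A c N x (polyOp A c N x (genTorsion (polyOp A c N) 1 V W x))
          + genTorsion (polyOp A c N) 1 (opApp (polyOp A c N) V) (opApp (polyOp A c N) W) x
          - polyOp A c N x (genTorsion (polyOp A c N) 1 V (opApp (polyOp A c N) W) x
              + genTorsion (polyOp A c N) 1 (opApp (polyOp A c N) V) W x)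
        from gt_succ _ 1 V W x]
    rw [level1 hU hA hc N hV hW hx,
        level1 hU hA hc N hBV hBW hx,
        level1 hU hA hc N hV hBW hx,
        level1 hU hA hc N hBV hW hx]
    rw [show opApp (polyOp A c N) V x = polyOp A c N x (V x) from rfl,
        show opApp (polyOp A c N) W x = polyOp A c N x (W x) from rfl]
    have hmain := main_step' hU hA hc N 1 le_rfl hV hW hx (bezoutQ c N 1 * (bezoutQ c N 2 * 1))
    have herr := err_cancel A c N x (V x) (W x)
    rw [key (polyOp A c N x) _ _ _ _ _ _ _ _ _ hmain herr]
    rw [show bezoutQ c N 1 * (bezoutQ c N 2 * (bezoutQ c N 1 * (bezoutQ c N 2 * 1)))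
        = bezoutQ c N 1 ^ (0+2) * bezoutQ c N 2 ^ (0+2) from by ring]
  | succ j ih =>
    intro V W hV hW x hx
    have hB := sm_polyOp hA hc N
    have hBV := sm_opApp hB hV
    have hBW := sm_opApp hB hW
    show genTorsion (polyOp A c N) ((j+2)+1) V W x
      = repHom A (genTorsion A ((j+2)+1)) V W x
          (bezoutQ c N 1 ^ ((j+2)+1) * bezoutQ c N 2 ^ ((j+2)+1))
    rw [show genTorsion (polyOp A c N) ((j+2)+1) V W x
        = polyOp A c N x (polyOp A c N x (genTorsion (polyOp A c N) (j+2) V W x))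
          + genTorsion (polyOp A c N) (j+2) (opApp (polyOp A c N) V)
              (opApp (polyOp A c N) W) x
          - polyOp A c N x (genTorsion (polyOp A c N) (j+2) V (opApp (polyOp A c N) W) x
              + genTorsion (polyOp A c N) (j+2) (opApp (polyOp A c N) V) W x)
        from gt_succ _ (j+2) V W x]
    rw [ih V W hV hW x hx,
        ih (opApp (polyOp A c N) V) (opApp (polyOp A c N) W) hBV hBW x hx,
        ih V (opApp (polyOp A c N) W) hV hBW x hx,
        ih (opApp (polyOp A c N) V) W hBV hW x hx]
    rw [main_step' hU hA hc N (j+2) (by omega) hV hW hx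
        (bezoutQ c N 1 ^ (j+2) * bezoutQ c N 2 ^ (j+2))]
    rw [show bezoutQ c N 1 * (bezoutQ c N 2 * (bezoutQ c N 1 ^ (j+2) * bezoutQ c N 2 ^ (j+2)))
        = bezoutQ c N 1 ^ ((j+2)+1) * bezoutQ c N 2 ^ ((j+2)+1) from by ring]

end Final

end BogAux

/-- for m ≥ 2,
τ⁽ᵐ⁾_{P(A)}(X,Y) = R_{(Q_P(z,λ))ᵐ(Q_P(z,μ))ᵐ}(τ⁽ᵐ⁾_A)(X,Y), the representation taken
with respect to A. -/
theorem genTorsion_polyOp_eq_rep {n : ℕ} (U : Set (Vec n)) (hU : IsOpen U)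
    (A : OpField n) (hA : ContDiffOn ℝ (⊤ : ℕ∞) A U)
    (N : ℕ) (c : ℕ → Vec n → ℝ) (hc : ∀ k, ContDiffOn ℝ (⊤ : ℕ∞) (c k) U)
    (m : ℕ) (hm : 2 ≤ m) :
    ∀ X Y : VF n, ContDiffOn ℝ (⊤ : ℕ∞) X U → ContDiffOn ℝ (⊤ : ℕ∞) Y U →
      ∀ x ∈ U,
        genTorsion (polyOp A c N) m X Y x =
          rep A (bezoutQ c N 1 ^ m * bezoutQ c N 2 ^ m) (genTorsion A m) X Y x := by
  intro X Y hX hY x hx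
  obtain ⟨j, rfl⟩ : ∃ j, m = j + 2 := ⟨m - 2, by omega⟩
  exact BogAux.mainlemma hU hA hc N j X Y hX hY x hx
end
end

section
/- Let A be a smooth operator field on an open set U ⊆ ℝⁿ such that τ⁽ᵐ⁾_A(X,Y)(x) = 0 for all smooth vector fields X, Y and all x ∈ U, for some integer m ≥ 2. Then for any smooth functions c₀, …, c_N : U → ℝ, the operator field P(x) = Σ_{k=0}^{N} c_k(x) A(x)ᵏ also satisfies τ⁽ᵐ⁾_P(X,Y)(x) = 0 for all smooth vector fields X, Y and all x ∈ U. -/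
noncomputable section

namespace TorsionAux

open Finset

abbrev Bil (n : ℕ) := VF n → VF n → VF n

variable {n : ℕ}

def LL (A : OpField n) : Module.End ℝ (Bil n) where
  toFun B := fun V W x => A x (B V W x)
  map_add' B C := by funext V W x; exact map_add (A x) _ _
  map_smul' r B := by funext V W x; exact map_smul (A x) r _

def S1 (A : OpField n) : Module.End ℝ (Bil n) where
  toFun B := fun V W => B (opApp A V) W
  map_add' B C := rfl
  map_smul' r B := rfl

def S2 (A : OpField n) : Module.End ℝ (Bil n) where
  toFun B := fun V W => B V (opApp A W)
  map_add' B C := rfl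
  map_smul' r B := rfl

def Mf (f : Vec n → ℝ) : Module.End ℝ (Bil n) where
  toFun B := fun V W x => f x • B V W x
  map_add' B C := by funext V W x; simp [smul_add]
  map_smul' r B := by funext V W x; simp [smul_comm r (f x)]

def powField (A : OpField n) (k : ℕ) : OpField n := fun x => (A x) ^ k

@[simp] lemma LL_apply (A : OpField n) (B : Bil n) (V W x) : LL A B V W x = A x (B V W x) := rfl
@[simp] lemma S1_apply (A : OpField n) (B : Bil n) (V W) : S1 A B V W = B (opApp A V) W := rfl
@[simp] lemma S2_apply (A : OpField n) (B : Bil n) (V W) : S2 A B V W = B V (opApp A W) := rfl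
@[simp] lemma Mf_apply (f : Vec n → ℝ) (B : Bil n) (V W x) : Mf f B V W x = f x • B V W x := rfl

lemma opApp_powField_zero (A : OpField n) (V : VF n) : opApp (powField A 0) V = V := by
  funext x; simp [opApp, powField]

lemma opApp_powField_succ (A : OpField n) (k : ℕ) (V : VF n) :
    opApp A (opApp (powField A k) V) = opApp (powField A (k+1)) V := by
  funext x
  simp only [opApp, powField, pow_succ', ContinuousLinearMap.mul_apply]

lemma S1_pow (A : OpField n) (k : ℕ) (B : Bil n) :
    ((S1 A) ^ k) B = fun V W => B (opApp (powField A k) V) W := by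
  induction k generalizing B with
  | zero => funext V W; rw [pow_zero, Module.End.one_apply, opApp_powField_zero]
  | succ k ih =>
      funext V W
      rw [pow_succ, Module.End.mul_apply, ih]
      show B (opApp A (opApp (powField A k) V)) W = _
      rw [opApp_powField_succ]

lemma S2_pow (A : OpField n) (k : ℕ) (B : Bil n) :
    ((S2 A) ^ k) B = fun V W => B V (opApp (powField A k) W) := by
  induction k generalizing B with
  | zero => funext V W; rw [pow_zero, Module.End.one_apply, opApp_powField_zero]
  | succ k ih =>
      funext V W
      rw [pow_succ, Module.End.mul_apply, ih]
      show B V (opApp A (opApp (powField A k) W)) = _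
      rw [opApp_powField_succ]

lemma LL_pow (A : OpField n) (k : ℕ) (B : Bil n) :
    ((LL A) ^ k) B = fun V W x => powField A k x (B V W x) := by
  induction k generalizing B with
  | zero => funext V W x; rw [pow_zero, Module.End.one_apply]; simp [powField]
  | succ k ih =>
      funext V W x
      rw [pow_succ', Module.End.mul_apply, ih]
      show A x (powField A k x (B V W x)) = _
      simp only [powField, pow_succ', ContinuousLinearMap.mul_apply]

lemma comm_LL_S1 (A A' : OpField n) : Commute (LL A) (S1 A') := LinearMap.ext fun B => rfl
lemma comm_LL_S2 (A A' : OpField n) : Commute (LL A) (S2 A') := LinearMap.ext fun B => rfl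
lemma comm_S1_S2 (A A' : OpField n) : Commute (S1 A) (S2 A') := LinearMap.ext fun B => rfl
lemma comm_Mf_LL (f : Vec n → ℝ) (A : OpField n) : Commute (Mf f) (LL A) := by
  refine LinearMap.ext fun B => ?_
  funext V W x
  simp [Module.End.mul_apply, map_smul]
lemma comm_Mf_S1 (f : Vec n → ℝ) (A : OpField n) : Commute (Mf f) (S1 A) := LinearMap.ext fun B => rfl
lemma comm_Mf_S2 (f : Vec n → ℝ) (A : OpField n) : Commute (Mf f) (S2 A) := LinearMap.ext fun B => rfl

/-- The torsion operator of an operator field. -/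
def FF (Q : OpField n) : Module.End ℝ (Bil n) := (LL Q - S1 Q) * (LL Q - S2 Q)

lemma genTorsion_eq (Q : OpField n) (m : ℕ) :
    genTorsion Q m = ((FF Q) ^ m) (fun V W => lieBracket V W) := by
  induction m with
  | zero => rw [pow_zero, Module.End.one_apply]; rfl
  | succ m ih =>
      funext V W x
      rw [pow_succ', Module.End.mul_apply, ← ih]
      show genTorsion Q (m+1) V W x = _
      simp only [FF, Module.End.mul_apply, LinearMap.sub_apply, Pi.sub_apply, LL_apply, S1_apply,
        S2_apply, genTorsion]
      rw [map_sub (Q x), map_add (Q x)]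
      abel

lemma QQ_apply (A : OpField n) (k l : ℕ) (B : Bil n) (V W x) :
    (((LL A) ^ k - (S1 A) ^ k) * ((LL A) ^ l - (S2 A) ^ l)) B V W x
      = powField A k x (powField A l x (B V W x))
        - powField A k x (B V (opApp (powField A l) W) x)
        - powField A l x (B (opApp (powField A k) V) W x)
        + B (opApp (powField A k) V) (opApp (powField A l) W) x := by
  rw [Module.End.mul_apply]
  rw [LinearMap.sub_apply]
  have h2 : ((LL A) ^ l - (S2 A) ^ l) B = fun V W x => powField A l x (B V W x) - B V (opApp (powField A l) W) x := by
    funext V W x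
    rw [LinearMap.sub_apply, Pi.sub_apply, Pi.sub_apply, Pi.sub_apply, LL_pow, S2_pow]
  rw [h2, LL_pow, S1_pow]
  show powField A k x ((fun V W x => powField A l x (B V W x) - B V (opApp (powField A l) W) x) V W x)
      - (fun V W x => powField A l x (B V W x) - B V (opApp (powField A l) W) x) (opApp (powField A k) V) W x = _
  simp only []
  rw [map_sub (powField A k x)]
  abel

end TorsionAux

namespace TorsionAux

open Finset Filter

variable {n : ℕ}

/-- Smoothness on `U`. -/
def smo (U : Set (Vec n)) {E : Type*} [NormedAddCommGroup E] [NormedSpace ℝ E]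
    (f : Vec n → E) : Prop := ContDiffOn ℝ (⊤ : ℕ∞) f U

/-- Two bilinear assignments agree on `U` when fed smooth fields. -/
def Rel (U : Set (Vec n)) (B B' : Bil n) : Prop :=
  ∀ V W : VF n, smo U V → smo U W → ∀ x ∈ U, B V W x = B' V W x

/-- An endomorphism of `Bil` preserving the relation `Rel`. -/
def Pre (U : Set (Vec n)) (T : Module.End ℝ (Bil n)) : Prop :=
  ∀ B B', Rel U B B' → Rel U (T B) (T B')

section RelLemmas

variable {U : Set (Vec n)}

lemma Rel.trans {B B' B'' : Bil n} (h : Rel U B B') (h' : Rel U B' B'') : Rel U B B'' :=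
  fun V W hV hW x hx => (h V W hV hW x hx).trans (h' V W hV hW x hx)

lemma Rel.add {B₁ B₂ B₁' B₂' : Bil n} (h : Rel U B₁ B₁') (h' : Rel U B₂ B₂') :
    Rel U (B₁ + B₂) (B₁' + B₂') := by
  intro V W hV hW x hx
  show B₁ V W x + B₂ V W x = B₁' V W x + B₂' V W x
  rw [h V W hV hW x hx, h' V W hV hW x hx]

lemma Rel.sub {B₁ B₂ B₁' B₂' : Bil n} (h : Rel U B₁ B₁') (h' : Rel U B₂ B₂') :
    Rel U (B₁ - B₂) (B₁' - B₂') := by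
  intro V W hV hW x hx
  show B₁ V W x - B₂ V W x = B₁' V W x - B₂' V W x
  rw [h V W hV hW x hx, h' V W hV hW x hx]

lemma Rel.sum {ι : Type*} {s : Finset ι} {f g : ι → Bil n}
    (h : ∀ i ∈ s, Rel U (f i) (g i)) :
    Rel U (∑ i ∈ s, f i) (∑ i ∈ s, g i) := by
  intro V W hV hW x hx
  have e : ∀ (F : ι → Bil n), (∑ i ∈ s, F i) V W x = ∑ i ∈ s, F i V W x := by
    intro F
    rw [Finset.sum_apply, Finset.sum_apply, Finset.sum_apply]
  rw [e, e]
  exact Finset.sum_congr rfl fun i hi => h i hi V W hV hW x hx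

lemma Rel.zero_sum {ι : Type*} {s : Finset ι} {f : ι → Bil n}
    (h : ∀ i ∈ s, Rel U (f i) 0) : Rel U (∑ i ∈ s, f i) 0 := by
  have := Rel.sum (U := U) h
  rwa [Finset.sum_const_zero] at this

lemma Pre.mul {T T' : Module.End ℝ (Bil n)} (h : Pre U T) (h' : Pre U T') : Pre U (T * T') :=
  fun B B' r => h _ _ (h' _ _ r)

lemma Pre.one : Pre U (1 : Module.End ℝ (Bil n)) := fun B B' r => r

lemma Pre.pow {T : Module.End ℝ (Bil n)} (h : Pre U T) (k : ℕ) : Pre U (T ^ k) := by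
  induction k with
  | zero => rw [pow_zero]; exact Pre.one
  | succ k ih => rw [pow_succ]; exact ih.mul h

lemma Pre.add {T T' : Module.End ℝ (Bil n)} (h : Pre U T) (h' : Pre U T') : Pre U (T + T') := by
  intro B B' r
  have : (T + T') B = T B + T' B := rfl
  rw [this]
  have : (T + T') B' = T B' + T' B' := rfl
  rw [this]
  exact (h _ _ r).add (h' _ _ r)

lemma Pre.sub {T T' : Module.End ℝ (Bil n)} (h : Pre U T) (h' : Pre U T') : Pre U (T - T') := by
  intro B B' r
  have e1 : (T - T') B = T B - T' B := by rw [LinearMap.sub_apply]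
  have e2 : (T - T') B' = T B' - T' B' := by rw [LinearMap.sub_apply]
  rw [e1, e2]
  exact (h _ _ r).sub (h' _ _ r)

lemma Pre.sum {ι : Type*} {s : Finset ι} {f : ι → Module.End ℝ (Bil n)}
    (h : ∀ i ∈ s, Pre U (f i)) : Pre U (∑ i ∈ s, f i) := by
  intro B B' r
  have e : ∀ C : Bil n, (∑ i ∈ s, f i) C = ∑ i ∈ s, f i C := fun C => by
    rw [LinearMap.sum_apply]
  rw [e, e]
  exact Rel.sum fun i hi => h i hi _ _ r

lemma Pre.Mf (f : Vec n → ℝ) : Pre U (Mf f) := by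
  intro B B' r V W hV hW x hx
  show f x • B V W x = f x • B' V W x
  rw [r V W hV hW x hx]

lemma Pre.LL (Q : OpField n) : Pre U (LL Q) := by
  intro B B' r V W hV hW x hx
  show Q x (B V W x) = Q x (B' V W x)
  rw [r V W hV hW x hx]

lemma Pre.S1 {Q : OpField n} (hQ : ∀ V : VF n, smo U V → smo U (opApp Q V)) : Pre U (S1 Q) := by
  intro B B' r V W hV hW x hx
  exact r (opApp Q V) W (hQ V hV) hW x hx

lemma Pre.S2 {Q : OpField n} (hQ : ∀ W : VF n, smo U W → smo U (opApp Q W)) : Pre U (S2 Q) := by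
  intro B B' r V W hV hW x hx
  exact r V (opApp Q W) hV (hQ W hW) x hx

lemma Rel.of_pre_zero {T : Module.End ℝ (Bil n)} (hT : Pre U T) {B : Bil n} (h : Rel U B 0) :
    Rel U (T B) 0 := by
  have := hT B 0 h
  rwa [map_zero] at this

end RelLemmas

section Smooth

variable {U : Set (Vec n)}

lemma smo.opApp {Q : OpField n} {V : VF n} (hQ : ContDiffOn ℝ (⊤ : ℕ∞) Q U) (hV : smo U V) :
    smo U (opApp Q V) := hQ.clm_apply hV

lemma smo_powField {A : OpField n} (hA : ContDiffOn ℝ (⊤ : ℕ∞) A U) (k : ℕ) :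
    ContDiffOn ℝ (⊤ : ℕ∞) (powField A k) U := by
  induction k with
  | zero =>
      have : powField A 0 = fun _ : Vec n => (1 : Vec n →L[ℝ] Vec n) := by
        funext x; simp [powField]
      rw [this]; exact contDiffOn_const
  | succ k ih =>
      have : powField A (k+1) = fun x => (A x).comp (powField A k x) := by
        funext x; rw [powField, pow_succ']; rfl
      rw [this]
      exact hA.clm_comp ih

lemma smo_sumsmul {M : ℕ} {g : ℕ → Vec n → ℝ} {Z : ℕ → VF n}
    (hg : ∀ k, smo U (g k)) (hZ : ∀ k, smo U (Z k)) :
    smo U (fun y => ∑ k ∈ range M, g k y • Z k y) :=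
  ContDiffOn.sum fun k _ => (hg k).smul (hZ k)

lemma smo.dAt {E : Type*} [NormedAddCommGroup E] [NormedSpace ℝ E] {f : Vec n → E}
    (hU : IsOpen U) (h : smo U f) {x : Vec n} (hx : x ∈ U) : DifferentiableAt ℝ f x :=
  (h.contDiffAt (hU.mem_nhds hx)).differentiableAt (by simp)

end Smooth

section Bracket

lemma lieBracket_congr {V V' W W' : VF n} {x : Vec n}
    (h1 : V =ᶠ[nhds x] V') (h2 : W =ᶠ[nhds x] W') :
    lieBracket V W x = lieBracket V' W' x := by
  unfold lieBracket
  rw [h1.fderiv_eq, h2.fderiv_eq, h1.eq_of_nhds, h2.eq_of_nhds]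

lemma lieBracket_sumsmul_left (M : ℕ) (g : ℕ → Vec n → ℝ) (Z : ℕ → VF n) (W : VF n) (x : Vec n)
    (hg : ∀ k, DifferentiableAt ℝ (g k) x) (hZ : ∀ k, DifferentiableAt ℝ (Z k) x) :
    lieBracket (fun y => ∑ k ∈ range M, g k y • Z k y) W x
      = ∑ k ∈ range M, (g k x • lieBracket (Z k) W x - fderiv ℝ (g k) x (W x) • Z k x) := by
  unfold lieBracket
  have hd : ∀ k ∈ range M, DifferentiableAt ℝ (fun y => g k y • Z k y) x :=
    fun k _ => (hg k).smul (hZ k)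
  rw [fderiv_fun_sum hd]
  have e1 : (fun y => ∑ k ∈ range M, g k y • Z k y) x = ∑ k ∈ range M, g k x • Z k x := rfl
  rw [e1, map_sum, ContinuousLinearMap.sum_apply, ← Finset.sum_sub_distrib]
  refine Finset.sum_congr rfl fun k _ => ?_
  rw [fderiv_fun_smul (hg k) (hZ k)]
  rw [ContinuousLinearMap.add_apply, ContinuousLinearMap.smul_apply,
    ContinuousLinearMap.smulRight_apply, map_smul, smul_sub]
  abel

lemma lieBracket_sumsmul_right (M : ℕ) (g : ℕ → Vec n → ℝ) (Z : ℕ → VF n) (V : VF n) (x : Vec n)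
    (hg : ∀ k, DifferentiableAt ℝ (g k) x) (hZ : ∀ k, DifferentiableAt ℝ (Z k) x) :
    lieBracket V (fun y => ∑ k ∈ range M, g k y • Z k y) x
      = ∑ k ∈ range M, (g k x • lieBracket V (Z k) x + fderiv ℝ (g k) x (V x) • Z k x) := by
  unfold lieBracket
  have hd : ∀ k ∈ range M, DifferentiableAt ℝ (fun y => g k y • Z k y) x :=
    fun k _ => (hg k).smul (hZ k)
  rw [fderiv_fun_sum hd]
  have e1 : (fun y => ∑ k ∈ range M, g k y • Z k y) x = ∑ k ∈ range M, g k x • Z k x := rfl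
  rw [e1, map_sum, ContinuousLinearMap.sum_apply, ← Finset.sum_sub_distrib]
  refine Finset.sum_congr rfl fun k _ => ?_
  rw [fderiv_fun_smul (hg k) (hZ k)]
  rw [ContinuousLinearMap.add_apply, ContinuousLinearMap.smul_apply,
    ContinuousLinearMap.smulRight_apply, map_smul, smul_sub]
  abel

end Bracket

end TorsionAux

namespace TorsionAux

open Finset Filter

variable {n : ℕ}

lemma FF_apply (Q : OpField n) (B : Bil n) (V W : VF n) (x : Vec n) :
    FF Q B V W x = Q x (Q x (B V W x)) - Q x (B V (opApp Q W) x)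
      - Q x (B (opApp Q V) W x) + B (opApp Q V) (opApp Q W) x := by
  have h2 : ((LL Q) - (S2 Q)) B = fun V W x => Q x (B V W x) - B V (opApp Q W) x := by
    funext V W x
    rw [LinearMap.sub_apply, Pi.sub_apply, Pi.sub_apply, Pi.sub_apply, LL_apply, S2_apply]
  show ((LL Q - S1 Q) * (LL Q - S2 Q)) B V W x = _
  rw [Module.End.mul_apply, h2, LinearMap.sub_apply, Pi.sub_apply, Pi.sub_apply, Pi.sub_apply,
    LL_apply, S1_apply]
  show Q x (Q x (B V W x) - B V (opApp Q W) x)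
      - (Q x (B (opApp Q V) W x) - B (opApp Q V) (opApp Q W) x) = _
  rw [map_sub (Q x)]
  abel

def QQ (A : OpField n) (k l : ℕ) : Module.End ℝ (Bil n) :=
  ((LL A) ^ k - (S1 A) ^ k) * ((LL A) ^ l - (S2 A) ^ l)

lemma QQ_apply' (A : OpField n) (k l : ℕ) (B : Bil n) (V W : VF n) (x : Vec n) :
    QQ A k l B V W x
      = powField A k x (powField A l x (B V W x))
        - powField A k x (B V (opApp (powField A l) W) x)
        - powField A l x (B (opApp (powField A k) V) W x)
        + B (opApp (powField A k) V) (opApp (powField A l) W) x := QQ_apply A k l B V W x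

lemma QQ_zero_left (A : OpField n) (l : ℕ) : QQ A 0 l = 0 := by
  unfold QQ; rw [pow_zero, pow_zero, sub_self, zero_mul]

lemma QQ_zero_right (A : OpField n) (k : ℕ) : QQ A k 0 = 0 := by
  unfold QQ; rw [pow_zero, pow_zero, sub_self, mul_zero]

section PSec

variable {U : Set (Vec n)} {A : OpField n} {N : ℕ} {c : ℕ → Vec n → ℝ} {P : OpField n}

lemma Papp (hP : ∀ x ∈ U, P x = ∑ k ∈ Finset.range (N + 1), c k x • A x ^ k)
    {x : Vec n} (hx : x ∈ U) (u : Vec n) :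
    P x u = ∑ k ∈ range (N+1), c k x • powField A k x u := by
  rw [hP x hx, ContinuousLinearMap.sum_apply]
  exact Finset.sum_congr rfl fun k _ => rfl

lemma opApp_P_eqOn (hP : ∀ x ∈ U, P x = ∑ k ∈ Finset.range (N + 1), c k x • A x ^ k)
    (V : VF n) : ∀ y ∈ U, opApp P V y = ∑ k ∈ range (N+1), c k y • opApp (powField A k) V y :=
  fun y hy => Papp hP hy (V y)

lemma opApp_P_ev (hU : IsOpen U)
    (hP : ∀ x ∈ U, P x = ∑ k ∈ Finset.range (N + 1), c k x • A x ^ k)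
    {x : Vec n} (hx : x ∈ U) (V : VF n) :
    opApp P V =ᶠ[nhds x] (fun y => ∑ k ∈ range (N+1), c k y • opApp (powField A k) V y) :=
  eventually_of_mem (hU.mem_nhds hx) (opApp_P_eqOn hP V)

lemma smo_opApp_P (hA : ContDiffOn ℝ (⊤ : ℕ∞) A U) (hc : ∀ k, smo U (c k))
    (hP : ∀ x ∈ U, P x = ∑ k ∈ Finset.range (N + 1), c k x • A x ^ k)
    {V : VF n} (hV : smo U V) : smo U (opApp P V) := by
  refine ContDiffOn.congr (smo_sumsmul (M := N+1) hc fun k => (smo_powField hA k).clm_apply hV) ?_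
  exact opApp_P_eqOn hP V

lemma commPA (hP : ∀ x ∈ U, P x = ∑ k ∈ Finset.range (N + 1), c k x • A x ^ k)
    {x : Vec n} (hx : x ∈ U) (k : ℕ) : Commute (P x) ((A x) ^ k) := by
  rw [hP x hx]
  refine Commute.sum_left _ _ _ fun j _ => ?_
  exact (Commute.pow_pow_self (A x) j k).smul_left (c j x)

/-- Kill a term of the form (V,W,x) ↦ γ(x)(V(x)) • C(x)(W(x)). -/
lemma classkill₁ (hP : ∀ x ∈ U, P x = ∑ k ∈ Finset.range (N + 1), c k x • A x ^ k)
    (γ : Vec n → (Vec n →L[ℝ] ℝ)) (C : OpField n) (hC : ∀ x ∈ U, Commute (P x) (C x)) :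
    Rel U ((FF P) (fun V W x => γ x (V x) • C x (W x))) 0 := by
  intro V W hV hW x hx
  have h0 : (0 : Bil n) V W x = 0 := rfl
  rw [h0, FF_apply]
  have hPC : ∀ u, P x (C x u) = C x (P x u) := by
    intro u
    have := congrArg (fun (T : Vec n →L[ℝ] Vec n) => T u) (hC x hx)
    simpa [ContinuousLinearMap.mul_apply] using this
  show P x (P x (γ x (V x) • C x (W x))) - P x (γ x (V x) • C x (opApp P W x))
      - P x (γ x (opApp P V x) • C x (W x)) + γ x (opApp P V x) • C x (opApp P W x) = 0
  simp only [map_smul]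
  show γ x (V x) • P x (P x (C x (W x))) - γ x (V x) • P x (C x (P x (W x)))
      - γ x (P x (V x)) • P x (C x (W x)) + γ x (P x (V x)) • C x (P x (W x)) = 0
  rw [hPC (W x), hPC (P x (W x))]
  abel

/-- Kill a term of the form (V,W,x) ↦ γ(x)(W(x)) • C(x)(V(x)). -/
lemma classkill₂ (hP : ∀ x ∈ U, P x = ∑ k ∈ Finset.range (N + 1), c k x • A x ^ k)
    (γ : Vec n → (Vec n →L[ℝ] ℝ)) (C : OpField n) (hC : ∀ x ∈ U, Commute (P x) (C x)) :
    Rel U ((FF P) (fun V W x => γ x (W x) • C x (V x))) 0 := by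
  intro V W hV hW x hx
  have h0 : (0 : Bil n) V W x = 0 := rfl
  rw [h0, FF_apply]
  have hPC : ∀ u, P x (C x u) = C x (P x u) := by
    intro u
    have := congrArg (fun (T : Vec n →L[ℝ] Vec n) => T u) (hC x hx)
    simpa [ContinuousLinearMap.mul_apply] using this
  show P x (P x (γ x (W x) • C x (V x))) - P x (γ x (opApp P W x) • C x (V x))
      - P x (γ x (W x) • C x (opApp P V x)) + γ x (opApp P W x) • C x (opApp P V x) = 0
  simp only [map_smul]
  show γ x (W x) • P x (P x (C x (V x))) - γ x (P x (W x)) • P x (C x (V x))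
      - γ x (W x) • P x (C x (P x (V x))) + γ x (P x (W x)) • C x (P x (V x)) = 0
  rw [hPC (V x), hPC (P x (V x))]
  abel

end PSec

/-- Bi-tensoriality data for a bilinear assignment. -/
structure Good (U : Set (Vec n)) (B : Bil n) : Prop where
  congr₁ : ∀ V V' W : VF n, ∀ x ∈ U, V =ᶠ[nhds x] V' → B V W x = B V' W x
  congr₂ : ∀ V W W' : VF n, ∀ x ∈ U, W =ᶠ[nhds x] W' → B V W x = B V W' x
  sum₁ : ∀ (M : ℕ) (g : ℕ → Vec n → ℝ) (Z : ℕ → VF n) (W : VF n),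
    (∀ k, smo U (g k)) → (∀ k, smo U (Z k)) → smo U W → ∀ x ∈ U,
    B (fun y => ∑ k ∈ range M, g k y • Z k y) W x = ∑ k ∈ range M, g k x • B (Z k) W x
  sum₂ : ∀ (M : ℕ) (g : ℕ → Vec n → ℝ) (Z : ℕ → VF n) (V : VF n),
    (∀ k, smo U (g k)) → (∀ k, smo U (Z k)) → smo U V → ∀ x ∈ U,
    B V (fun y => ∑ k ∈ range M, g k y • Z k y) x = ∑ k ∈ range M, g k x • B V (Z k) x

section GoodLemmas

variable {U : Set (Vec n)}

lemma Good.add {B B' : Bil n} (h : Good U B) (h' : Good U B') : Good U (B + B') := by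
  constructor
  · intro V V' W x hx he
    show B V W x + B' V W x = B V' W x + B' V' W x
    rw [h.congr₁ V V' W x hx he, h'.congr₁ V V' W x hx he]
  · intro V W W' x hx he
    show B V W x + B' V W x = B V W' x + B' V W' x
    rw [h.congr₂ V W W' x hx he, h'.congr₂ V W W' x hx he]
  · intro M g Z W hg hZ hW x hx
    show B _ W x + B' _ W x = _
    rw [h.sum₁ M g Z W hg hZ hW x hx, h'.sum₁ M g Z W hg hZ hW x hx, ← Finset.sum_add_distrib]
    exact Finset.sum_congr rfl fun k _ => (smul_add _ _ _).symm
  · intro M g Z V hg hZ hV x hx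
    show B V _ x + B' V _ x = _
    rw [h.sum₂ M g Z V hg hZ hV x hx, h'.sum₂ M g Z V hg hZ hV x hx, ← Finset.sum_add_distrib]
    exact Finset.sum_congr rfl fun k _ => (smul_add _ _ _).symm

lemma Good.neg {B : Bil n} (h : Good U B) : Good U (-B) := by
  constructor
  · intro V V' W x hx he
    show -(B V W x) = -(B V' W x)
    rw [h.congr₁ V V' W x hx he]
  · intro V W W' x hx he
    show -(B V W x) = -(B V W' x)
    rw [h.congr₂ V W W' x hx he]
  · intro M g Z W hg hZ hW x hx
    show -(B _ W x) = _
    rw [h.sum₁ M g Z W hg hZ hW x hx, ← Finset.sum_neg_distrib]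
    exact Finset.sum_congr rfl fun k _ => (smul_neg _ _).symm
  · intro M g Z V hg hZ hV x hx
    show -(B V _ x) = _
    rw [h.sum₂ M g Z V hg hZ hV x hx, ← Finset.sum_neg_distrib]
    exact Finset.sum_congr rfl fun k _ => (smul_neg _ _).symm

lemma Good.sub {B B' : Bil n} (h : Good U B) (h' : Good U B') : Good U (B - B') := by
  have := h.add h'.neg
  rwa [sub_eq_add_neg]

lemma Good.sum {ι : Type*} {s : Finset ι} {f : ι → Bil n} (h : ∀ i ∈ s, Good U (f i)) :
    Good U (∑ i ∈ s, f i) := by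
  classical
  induction s using Finset.induction_on with
  | empty =>
      rw [Finset.sum_empty]
      have hz : ∀ (M : ℕ) (g : ℕ → Vec n → ℝ) (h : ℕ → Vec n) (x : Vec n),
          ∑ k ∈ range M, g k x • (0 : Vec n) = 0 := by
        intro M g h x
        refine Finset.sum_eq_zero fun k _ => smul_zero _
      constructor
      · intro _ _ _ _ _ _; rfl
      · intro _ _ _ _ _ _; rfl
      · intro M g Z W _ _ _ x hx
        show (0 : Vec n) = ∑ k ∈ range M, g k x • (0 : Vec n)
        rw [hz M g (fun k => Z k x) x]
      · intro M g Z V _ _ _ x hx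
        show (0 : Vec n) = ∑ k ∈ range M, g k x • (0 : Vec n)
        rw [hz M g (fun k => Z k x) x]
  | insert _ _ hni ih =>
      rw [Finset.sum_insert hni]
      exact (h _ (Finset.mem_insert_self _ _)).add
        (ih fun i hi => h i (Finset.mem_insert_of_mem hi))

lemma Good.Mf {B : Bil n} (f : Vec n → ℝ) (h : Good U B) : Good U (Mf f B) := by
  constructor
  · intro V V' W x hx he
    show f x • B V W x = f x • B V' W x
    rw [h.congr₁ V V' W x hx he]
  · intro V W W' x hx he
    show f x • B V W x = f x • B V W' x
    rw [h.congr₂ V W W' x hx he]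
  · intro M g Z W hg hZ hW x hx
    show f x • B _ W x = _
    rw [h.sum₁ M g Z W hg hZ hW x hx, Finset.smul_sum]
    exact Finset.sum_congr rfl fun k _ => by rw [smul_comm]; rfl
  · intro M g Z V hg hZ hV x hx
    show f x • B V _ x = _
    rw [h.sum₂ M g Z V hg hZ hV x hx, Finset.smul_sum]
    exact Finset.sum_congr rfl fun k _ => by rw [smul_comm]; rfl

lemma Good.LL {B : Bil n} (Q : OpField n) (h : Good U B) : Good U (LL Q B) := by
  constructor
  · intro V V' W x hx he
    show Q x (B V W x) = Q x (B V' W x)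
    rw [h.congr₁ V V' W x hx he]
  · intro V W W' x hx he
    show Q x (B V W x) = Q x (B V W' x)
    rw [h.congr₂ V W W' x hx he]
  · intro M g Z W hg hZ hW x hx
    show Q x (B _ W x) = _
    rw [h.sum₁ M g Z W hg hZ hW x hx, map_sum]
    exact Finset.sum_congr rfl fun k _ => by rw [map_smul]; rfl
  · intro M g Z V hg hZ hV x hx
    show Q x (B V _ x) = _
    rw [h.sum₂ M g Z V hg hZ hV x hx, map_sum]
    exact Finset.sum_congr rfl fun k _ => by rw [map_smul]; rfl

lemma opApp_ev {Q : OpField n} {V V' : VF n} {x : Vec n} (he : V =ᶠ[nhds x] V') :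
    opApp Q V =ᶠ[nhds x] opApp Q V' :=
  he.mono fun y hy => by simp only [opApp, hy]

lemma opApp_sumsmul (Q : OpField n) (M : ℕ) (g : ℕ → Vec n → ℝ) (Z : ℕ → VF n) :
    opApp Q (fun y => ∑ k ∈ range M, g k y • Z k y)
      = fun y => ∑ k ∈ range M, g k y • opApp Q (Z k) y := by
  funext y
  show Q y (∑ k ∈ range M, g k y • Z k y) = _
  rw [map_sum]
  exact Finset.sum_congr rfl fun k _ => by rw [map_smul]; rfl

lemma Good.S1g {B : Bil n} {Q : OpField n}
    (hsm : ∀ V : VF n, smo U V → smo U (opApp Q V)) (h : Good U B) : Good U (S1 Q B) := by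
  constructor
  · intro V V' W x hx he
    exact h.congr₁ _ _ W x hx (opApp_ev he)
  · intro V W W' x hx he
    exact h.congr₂ _ W W' x hx he
  · intro M g Z W hg hZ hW x hx
    show B (opApp Q (fun y => ∑ k ∈ range M, g k y • Z k y)) W x = _
    rw [opApp_sumsmul]
    exact h.sum₁ M g (fun k => opApp Q (Z k)) W hg (fun k => hsm (Z k) (hZ k)) hW x hx
  · intro M g Z V hg hZ hV x hx
    exact h.sum₂ M g Z _ hg hZ (hsm V hV) x hx

lemma Good.S2g {B : Bil n} {Q : OpField n}
    (hsm : ∀ V : VF n, smo U V → smo U (opApp Q V)) (h : Good U B) : Good U (S2 Q B) := by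
  constructor
  · intro V V' W x hx he
    exact h.congr₁ V V' _ x hx he
  · intro V W W' x hx he
    exact h.congr₂ V _ _ x hx (opApp_ev he)
  · intro M g Z W hg hZ hW x hx
    exact h.sum₁ M g Z _ hg hZ (hsm W hW) x hx
  · intro M g Z V hg hZ hV x hx
    show B V (opApp Q (fun y => ∑ k ∈ range M, g k y • Z k y)) x = _
    rw [opApp_sumsmul]
    exact h.sum₂ M g (fun k => opApp Q (Z k)) V hg (fun k => hsm (Z k) (hZ k)) hV x hx

end GoodLemmas

end TorsionAux

namespace TorsionAux

open Finset Filter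

variable {n : ℕ}

def BrD : Bil n := fun V W => lieBracket V W

section QQBr

variable {U : Set (Vec n)} {A : OpField n}

lemma pow_comm_apply (A : OpField n) (a b : ℕ) (x : Vec n) (u : Vec n) :
    powField A a x (powField A b x u) = powField A b x (powField A a x u) := by
  show ((A x) ^ a * (A x) ^ b) u = ((A x) ^ b * (A x) ^ a) u
  rw [pow_mul_comm]

lemma good_QQ_Br (hU : IsOpen U) (hA : ContDiffOn ℝ (⊤ : ℕ∞) A U) (a b : ℕ) :
    Good U (QQ A a b (BrD (n := n))) := by
  have hsm : ∀ (j : ℕ) (V : VF n), smo U V → smo U (opApp (powField A j) V) :=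
    fun j V hV => (smo_powField hA j).clm_apply hV
  constructor
  · -- congr₁
    intro V V' W x hx he
    rw [QQ_apply', QQ_apply']
    have h1 : BrD (n := n) V W x = BrD V' W x := lieBracket_congr he EventuallyEq.rfl
    have h2 : BrD (n := n) V (opApp (powField A b) W) x = BrD V' (opApp (powField A b) W) x :=
      lieBracket_congr he EventuallyEq.rfl
    have h3 : BrD (n := n) (opApp (powField A a) V) W x = BrD (opApp (powField A a) V') W x :=
      lieBracket_congr (opApp_ev he) EventuallyEq.rfl
    have h4 : BrD (n := n) (opApp (powField A a) V) (opApp (powField A b) W) x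
        = BrD (opApp (powField A a) V') (opApp (powField A b) W) x :=
      lieBracket_congr (opApp_ev he) EventuallyEq.rfl
    rw [h1, h2, h3, h4]
  · -- congr₂
    intro V W W' x hx he
    rw [QQ_apply', QQ_apply']
    have h1 : BrD (n := n) V W x = BrD V W' x := lieBracket_congr EventuallyEq.rfl he
    have h2 : BrD (n := n) V (opApp (powField A b) W) x = BrD V (opApp (powField A b) W') x :=
      lieBracket_congr EventuallyEq.rfl (opApp_ev he)
    have h3 : BrD (n := n) (opApp (powField A a) V) W x = BrD (opApp (powField A a) V) W' x :=
      lieBracket_congr EventuallyEq.rfl he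
    have h4 : BrD (n := n) (opApp (powField A a) V) (opApp (powField A b) W) x
        = BrD (opApp (powField A a) V) (opApp (powField A b) W') x :=
      lieBracket_congr EventuallyEq.rfl (opApp_ev he)
    rw [h1, h2, h3, h4]
  · -- sum₁
    intro M g Z W hg hZ hW x hx
    have hgd : ∀ j, DifferentiableAt ℝ (g j) x := fun j => (hg j).dAt hU hx
    have hZd : ∀ j, DifferentiableAt ℝ (Z j) x := fun j => (hZ j).dAt hU hx
    have hZad : ∀ j, DifferentiableAt ℝ (opApp (powField A a) (Z j)) x :=
      fun j => (hsm a (Z j) (hZ j)).dAt hU hx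
    rw [QQ_apply']
    have e1 : BrD (n := n) (fun y => ∑ j ∈ range M, g j y • Z j y) W x
        = ∑ j ∈ range M, (g j x • lieBracket (Z j) W x - fderiv ℝ (g j) x (W x) • Z j x) :=
      lieBracket_sumsmul_left M g Z W x hgd hZd
    have e2 : BrD (n := n) (fun y => ∑ j ∈ range M, g j y • Z j y) (opApp (powField A b) W) x
        = ∑ j ∈ range M, (g j x • lieBracket (Z j) (opApp (powField A b) W) x
            - fderiv ℝ (g j) x (opApp (powField A b) W x) • Z j x) :=
      lieBracket_sumsmul_left M g Z _ x hgd hZd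
    have eop : opApp (powField A a) (fun y => ∑ j ∈ range M, g j y • Z j y)
        = fun y => ∑ j ∈ range M, g j y • opApp (powField A a) (Z j) y :=
      opApp_sumsmul _ M g Z
    have e3 : BrD (n := n) (opApp (powField A a) (fun y => ∑ j ∈ range M, g j y • Z j y)) W x
        = ∑ j ∈ range M, (g j x • lieBracket (opApp (powField A a) (Z j)) W x
            - fderiv ℝ (g j) x (W x) • opApp (powField A a) (Z j) x) := by
      rw [show BrD (n := n) (opApp (powField A a) (fun y => ∑ j ∈ range M, g j y • Z j y)) W x
            = BrD (fun y => ∑ j ∈ range M, g j y • opApp (powField A a) (Z j) y) W x by rw [eop]]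
      exact lieBracket_sumsmul_left M g _ W x hgd hZad
    have e4 : BrD (n := n) (opApp (powField A a) (fun y => ∑ j ∈ range M, g j y • Z j y))
          (opApp (powField A b) W) x
        = ∑ j ∈ range M, (g j x • lieBracket (opApp (powField A a) (Z j)) (opApp (powField A b) W) x
            - fderiv ℝ (g j) x (opApp (powField A b) W x) • opApp (powField A a) (Z j) x) := by
      rw [show BrD (n := n) (opApp (powField A a) (fun y => ∑ j ∈ range M, g j y • Z j y))
            (opApp (powField A b) W) x
          = BrD (fun y => ∑ j ∈ range M, g j y • opApp (powField A a) (Z j) y)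
            (opApp (powField A b) W) x by rw [eop]]
      exact lieBracket_sumsmul_left M g _ _ x hgd hZad
    rw [e1, e2, e3, e4]
    simp only [map_sum]
    rw [← Finset.sum_sub_distrib, ← Finset.sum_sub_distrib, ← Finset.sum_add_distrib]
    refine Finset.sum_congr rfl fun j _ => ?_
    rw [QQ_apply']
    have hcom := pow_comm_apply A a b x (Z j x)
    simp only [BrD, opApp, map_sub, map_smul, smul_sub, smul_add]
    rw [hcom]
    abel
  · -- sum₂
    intro M g Z V hg hZ hV x hx
    have hgd : ∀ j, DifferentiableAt ℝ (g j) x := fun j => (hg j).dAt hU hx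
    have hZd : ∀ j, DifferentiableAt ℝ (Z j) x := fun j => (hZ j).dAt hU hx
    have hZbd : ∀ j, DifferentiableAt ℝ (opApp (powField A b) (Z j)) x :=
      fun j => (hsm b (Z j) (hZ j)).dAt hU hx
    rw [QQ_apply']
    have e1 : BrD (n := n) V (fun y => ∑ j ∈ range M, g j y • Z j y) x
        = ∑ j ∈ range M, (g j x • lieBracket V (Z j) x + fderiv ℝ (g j) x (V x) • Z j x) :=
      lieBracket_sumsmul_right M g Z V x hgd hZd
    have eop : opApp (powField A b) (fun y => ∑ j ∈ range M, g j y • Z j y)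
        = fun y => ∑ j ∈ range M, g j y • opApp (powField A b) (Z j) y :=
      opApp_sumsmul _ M g Z
    have e2 : BrD (n := n) V (opApp (powField A b) (fun y => ∑ j ∈ range M, g j y • Z j y)) x
        = ∑ j ∈ range M, (g j x • lieBracket V (opApp (powField A b) (Z j)) x
            + fderiv ℝ (g j) x (V x) • opApp (powField A b) (Z j) x) := by
      rw [show BrD (n := n) V (opApp (powField A b) (fun y => ∑ j ∈ range M, g j y • Z j y)) x
          = BrD V (fun y => ∑ j ∈ range M, g j y • opApp (powField A b) (Z j) y) x by rw [eop]]
      exact lieBracket_sumsmul_right M g _ V x hgd hZbd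
    have e3 : BrD (n := n) (opApp (powField A a) V) (fun y => ∑ j ∈ range M, g j y • Z j y) x
        = ∑ j ∈ range M, (g j x • lieBracket (opApp (powField A a) V) (Z j) x
            + fderiv ℝ (g j) x (opApp (powField A a) V x) • Z j x) :=
      lieBracket_sumsmul_right M g Z _ x hgd hZd
    have e4 : BrD (n := n) (opApp (powField A a) V)
          (opApp (powField A b) (fun y => ∑ j ∈ range M, g j y • Z j y)) x
        = ∑ j ∈ range M, (g j x • lieBracket (opApp (powField A a) V) (opApp (powField A b) (Z j)) x
            + fderiv ℝ (g j) x (opApp (powField A a) V x) • opApp (powField A b) (Z j) x) := by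
      rw [show BrD (n := n) (opApp (powField A a) V)
            (opApp (powField A b) (fun y => ∑ j ∈ range M, g j y • Z j y)) x
          = BrD (opApp (powField A a) V)
            (fun y => ∑ j ∈ range M, g j y • opApp (powField A b) (Z j) y) x by rw [eop]]
      exact lieBracket_sumsmul_right M g _ _ x hgd hZbd
    rw [e1, e2, e3, e4]
    simp only [map_sum]
    rw [← Finset.sum_sub_distrib, ← Finset.sum_sub_distrib, ← Finset.sum_add_distrib]
    refine Finset.sum_congr rfl fun j _ => ?_
    rw [QQ_apply']
    simp only [BrD, opApp, map_add, map_smul, smul_sub, smul_add]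
    abel

end QQBr

end TorsionAux

namespace TorsionAux

open Finset Filter

variable {n : ℕ}

section Expand

variable {U : Set (Vec n)} {A : OpField n} {N : ℕ} {c : ℕ → Vec n → ℝ} {P : OpField n}

/-- Pointwise expansion of a double application of `P x` over the polynomial sum. -/
lemma hps_lemma (hP : ∀ x ∈ U, P x = ∑ k ∈ Finset.range (N + 1), c k x • A x ^ k)
    {x : Vec n} (hx : x ∈ U) (b : ℕ → Vec n) :
    P x (∑ l ∈ range (N+1), c l x • b l)
      = ∑ k ∈ range (N+1), ∑ l ∈ range (N+1), (c k x * c l x) • powField A k x (b l) := by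
  rw [Papp hP hx]
  refine Finset.sum_congr rfl fun k _ => ?_
  rw [map_sum, Finset.smul_sum]
  exact Finset.sum_congr rfl fun l _ => by rw [map_smul, smul_smul]

lemma expandGood (hU : IsOpen U) (hA : ContDiffOn ℝ (⊤ : ℕ∞) A U) (hc : ∀ k, smo U (c k))
    (hP : ∀ x ∈ U, P x = ∑ k ∈ Finset.range (N + 1), c k x • A x ^ k)
    {B : Bil n} (hB : Good U B) :
    Rel U ((FF P) B)
      (∑ k ∈ range (N+1), ∑ l ∈ range (N+1), Mf (fun y => c k y * c l y) (QQ A k l B)) := by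
  intro V W hV hW x hx
  have hYs : ∀ j, smo U (opApp (powField A j) W) := fun j => (smo_powField hA j).clm_apply hW
  have hZs : ∀ j, smo U (opApp (powField A j) V) := fun j => (smo_powField hA j).clm_apply hV
  have hPV : smo U (opApp P V) := smo_opApp_P hA hc hP hV
  have hPW : smo U (opApp P W) := smo_opApp_P hA hc hP hW
  have h1 : B V (opApp P W) x = ∑ l ∈ range (N+1), c l x • B V (opApp (powField A l) W) x :=
    (hB.congr₂ V _ _ x hx (opApp_P_ev hU hP hx W)).trans
      (hB.sum₂ (N+1) c (fun l => opApp (powField A l) W) V hc hYs hV x hx)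
  have h2 : B (opApp P V) W x = ∑ k ∈ range (N+1), c k x • B (opApp (powField A k) V) W x :=
    (hB.congr₁ _ _ W x hx (opApp_P_ev hU hP hx V)).trans
      (hB.sum₁ (N+1) c (fun k => opApp (powField A k) V) W hc hZs hW x hx)
  have h3 : B (opApp P V) (opApp P W) x
      = ∑ k ∈ range (N+1), ∑ l ∈ range (N+1),
          (c k x * c l x) • B (opApp (powField A k) V) (opApp (powField A l) W) x := by
    have h3a : B (opApp P V) (opApp P W) x
        = ∑ k ∈ range (N+1), c k x • B (opApp (powField A k) V) (opApp P W) x :=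
      (hB.congr₁ _ _ _ x hx (opApp_P_ev hU hP hx V)).trans
        (hB.sum₁ (N+1) c (fun k => opApp (powField A k) V) (opApp P W) hc hZs hPW x hx)
    rw [h3a]
    refine Finset.sum_congr rfl fun k _ => ?_
    have h3b : B (opApp (powField A k) V) (opApp P W) x
        = ∑ l ∈ range (N+1), c l x • B (opApp (powField A k) V) (opApp (powField A l) W) x :=
      (hB.congr₂ _ _ _ x hx (opApp_P_ev hU hP hx W)).trans
        (hB.sum₂ (N+1) c (fun l => opApp (powField A l) W) _ hc hYs (hZs k) x hx)
    rw [h3b, Finset.smul_sum]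
    exact Finset.sum_congr rfl fun l _ => by rw [smul_smul]
  have E1 : P x (P x (B V W x))
      = ∑ k ∈ range (N+1), ∑ l ∈ range (N+1),
          (c k x * c l x) • powField A k x (powField A l x (B V W x)) := by
    rw [Papp hP hx (B V W x), hps_lemma hP hx]
  have E2 : P x (B V (opApp P W) x)
      = ∑ k ∈ range (N+1), ∑ l ∈ range (N+1),
          (c k x * c l x) • powField A k x (B V (opApp (powField A l) W) x) := by
    rw [h1, hps_lemma hP hx]
  have E3 : P x (B (opApp P V) W x)
      = ∑ k ∈ range (N+1), ∑ l ∈ range (N+1),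
          (c k x * c l x) • powField A l x (B (opApp (powField A k) V) W x) := by
    rw [h2, hps_lemma hP hx, Finset.sum_comm]
    exact Finset.sum_congr rfl fun k _ => Finset.sum_congr rfl fun l _ => by rw [mul_comm]
  have eRHS : (∑ k ∈ range (N+1), ∑ l ∈ range (N+1),
        Mf (fun y => c k y * c l y) (QQ A k l B)) V W x
      = ∑ k ∈ range (N+1), ∑ l ∈ range (N+1), (c k x * c l x) • (QQ A k l B V W x) := by
    simp only [Finset.sum_apply, Mf_apply]
  rw [FF_apply, eRHS, E1, E2, E3, h3]
  rw [← Finset.sum_sub_distrib, ← Finset.sum_sub_distrib, ← Finset.sum_add_distrib]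
  refine Finset.sum_congr rfl fun k _ => ?_
  rw [← Finset.sum_sub_distrib, ← Finset.sum_sub_distrib, ← Finset.sum_add_distrib]
  refine Finset.sum_congr rfl fun l _ => ?_
  rw [QQ_apply', smul_add, smul_sub, smul_sub]

end Expand

end TorsionAux

namespace TorsionAux

open Finset Filter

variable {n : ℕ}

def Jel (A : OpField n) (c : ℕ → Vec n → ℝ) (N : ℕ) (P : OpField n) : Bil n := fun V W x =>
  ∑ k ∈ range (N+1),
    (fderiv ℝ (c k) x (P x (V x)) • opApp (powField A k) W x
     - fderiv ℝ (c k) x (P x (W x)) • opApp (powField A k) V x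
     - fderiv ℝ (c k) x (V x) • P x (opApp (powField A k) W x)
     + fderiv ℝ (c k) x (W x) • P x (opApp (powField A k) V x))

section Step1

variable {U : Set (Vec n)} {A : OpField n} {N : ℕ} {c : ℕ → Vec n → ℝ} {P : OpField n}

lemma step1 (hU : IsOpen U) (hA : ContDiffOn ℝ (⊤ : ℕ∞) A U) (hc : ∀ k, smo U (c k))
    (hP : ∀ x ∈ U, P x = ∑ k ∈ Finset.range (N + 1), c k x • A x ^ k) :
    Rel U ((FF P) (BrD (n := n)))
      ((∑ k ∈ range (N+1), ∑ l ∈ range (N+1), Mf (fun y => c k y * c l y) (QQ A k l (BrD (n := n))))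
        + Jel A c N P) := by
  intro V W hV hW x hx
  have hYs : ∀ j, smo U (opApp (powField A j) W) := fun j => (smo_powField hA j).clm_apply hW
  have hZs : ∀ j, smo U (opApp (powField A j) V) := fun j => (smo_powField hA j).clm_apply hV
  have hcd : ∀ k, DifferentiableAt ℝ (c k) x := fun k => (hc k).dAt hU hx
  have hYd : ∀ j, DifferentiableAt ℝ (opApp (powField A j) W) x := fun j => (hYs j).dAt hU hx
  have hZd : ∀ j, DifferentiableAt ℝ (opApp (powField A j) V) x := fun j => (hZs j).dAt hU hx
  -- bracket expansions
  have hb1 : BrD (n := n) V (opApp P W) x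
      = ∑ l ∈ range (N+1), (c l x • BrD V (opApp (powField A l) W) x
          + fderiv ℝ (c l) x (V x) • opApp (powField A l) W x) :=
    (lieBracket_congr EventuallyEq.rfl (opApp_P_ev hU hP hx W)).trans
      (lieBracket_sumsmul_right (N+1) c (fun l => opApp (powField A l) W) V x hcd hYd)
  have hb2 : BrD (n := n) (opApp P V) W x
      = ∑ k ∈ range (N+1), (c k x • BrD (opApp (powField A k) V) W x
          - fderiv ℝ (c k) x (W x) • opApp (powField A k) V x) :=
    (lieBracket_congr (opApp_P_ev hU hP hx V) EventuallyEq.rfl).trans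
      (lieBracket_sumsmul_left (N+1) c (fun k => opApp (powField A k) V) W x hcd hZd)
  have hb3 : BrD (n := n) (opApp P V) (opApp P W) x
      = ∑ k ∈ range (N+1),
          (c k x • (∑ l ∈ range (N+1),
              (c l x • BrD (opApp (powField A k) V) (opApp (powField A l) W) x
              + fderiv ℝ (c l) x (opApp (powField A k) V x) • opApp (powField A l) W x))
            - fderiv ℝ (c k) x (P x (W x)) • opApp (powField A k) V x) := by
    have h0 : BrD (n := n) (opApp P V) (opApp P W) x
        = lieBracket (fun y => ∑ k ∈ range (N+1), c k y • opApp (powField A k) V y)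
            (fun y => ∑ l ∈ range (N+1), c l y • opApp (powField A l) W y) x :=
      lieBracket_congr (opApp_P_ev hU hP hx V) (opApp_P_ev hU hP hx W)
    rw [h0, lieBracket_sumsmul_left (N+1) c (fun k => opApp (powField A k) V) _ x hcd hZd]
    refine Finset.sum_congr rfl fun k _ => ?_
    have hWh : (∑ l ∈ range (N+1), c l x • opApp (powField A l) W x) = P x (W x) :=
      (Papp hP hx (W x)).symm
    rw [hWh, lieBracket_sumsmul_right (N+1) c (fun l => opApp (powField A l) W) _ x hcd hYd]
    rfl
  -- the four main pieces
  have H1 : P x (P x (BrD (n := n) V W x))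
      = ∑ k ∈ range (N+1), ∑ l ∈ range (N+1),
          (c k x * c l x) • powField A k x (powField A l x (BrD (n := n) V W x)) := by
    rw [Papp hP hx (BrD (n := n) V W x), hps_lemma hP hx]
  have H2 : P x (BrD (n := n) V (opApp P W) x)
      = (∑ k ∈ range (N+1), ∑ l ∈ range (N+1),
          (c k x * c l x) • powField A k x (BrD (n := n) V (opApp (powField A l) W) x))
        + ∑ l ∈ range (N+1), fderiv ℝ (c l) x (V x) • P x (opApp (powField A l) W x) := by
    rw [hb1, Finset.sum_add_distrib, map_add]
    congr 1
    · exact hps_lemma hP hx _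
    · rw [map_sum]
      exact Finset.sum_congr rfl fun l _ => map_smul _ _ _
  have H3 : P x (BrD (n := n) (opApp P V) W x)
      = (∑ k ∈ range (N+1), ∑ l ∈ range (N+1),
          (c k x * c l x) • powField A l x (BrD (n := n) (opApp (powField A k) V) W x))
        - ∑ k ∈ range (N+1), fderiv ℝ (c k) x (W x) • P x (opApp (powField A k) V x) := by
    rw [hb2, Finset.sum_sub_distrib, map_sub]
    congr 1
    · rw [hps_lemma hP hx _, Finset.sum_comm]
      exact Finset.sum_congr rfl fun k _ => Finset.sum_congr rfl fun l _ => by rw [mul_comm]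
    · rw [map_sum]
      exact Finset.sum_congr rfl fun k _ => map_smul _ _ _
  have hdl : ∀ l, (∑ k ∈ range (N+1), (c k x * fderiv ℝ (c l) x (opApp (powField A k) V x)))
      = fderiv ℝ (c l) x (P x (V x)) := by
    intro l
    rw [Papp hP hx (V x), map_sum]
    exact Finset.sum_congr rfl fun k _ => by rw [map_smul, smul_eq_mul]; rfl
  have H4 : BrD (n := n) (opApp P V) (opApp P W) x
      = (∑ k ∈ range (N+1), ∑ l ∈ range (N+1),
          (c k x * c l x) • BrD (n := n) (opApp (powField A k) V) (opApp (powField A l) W) x)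
        + (∑ l ∈ range (N+1), fderiv ℝ (c l) x (P x (V x)) • opApp (powField A l) W x)
        - ∑ k ∈ range (N+1), fderiv ℝ (c k) x (P x (W x)) • opApp (powField A k) V x := by
    have eS : ∀ k ∈ range (N+1),
        c k x • (∑ l ∈ range (N+1),
            (c l x • BrD (n := n) (opApp (powField A k) V) (opApp (powField A l) W) x
            + fderiv ℝ (c l) x (opApp (powField A k) V x) • opApp (powField A l) W x))
        = (∑ l ∈ range (N+1),
            (c k x * c l x) • BrD (n := n) (opApp (powField A k) V) (opApp (powField A l) W) x)
          + ∑ l ∈ range (N+1),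
            (c k x * fderiv ℝ (c l) x (opApp (powField A k) V x)) • opApp (powField A l) W x := by
      intro k _
      rw [Finset.smul_sum, ← Finset.sum_add_distrib]
      refine Finset.sum_congr rfl fun l _ => ?_
      rw [smul_add, smul_smul, smul_smul]
    have eJ2 : (∑ k ∈ range (N+1), ∑ l ∈ range (N+1),
          (c k x * fderiv ℝ (c l) x (opApp (powField A k) V x)) • opApp (powField A l) W x)
        = ∑ l ∈ range (N+1), fderiv ℝ (c l) x (P x (V x)) • opApp (powField A l) W x := by
      rw [Finset.sum_comm]
      refine Finset.sum_congr rfl fun l _ => ?_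
      rw [← Finset.sum_smul, hdl l]
    calc BrD (n := n) (opApp P V) (opApp P W) x
        = ∑ k ∈ range (N+1),
            (c k x • (∑ l ∈ range (N+1),
                (c l x • BrD (opApp (powField A k) V) (opApp (powField A l) W) x
                + fderiv ℝ (c l) x (opApp (powField A k) V x) • opApp (powField A l) W x))
              - fderiv ℝ (c k) x (P x (W x)) • opApp (powField A k) V x) := hb3
      _ = (∑ k ∈ range (N+1),
            c k x • (∑ l ∈ range (N+1),
                (c l x • BrD (opApp (powField A k) V) (opApp (powField A l) W) x
                + fderiv ℝ (c l) x (opApp (powField A k) V x) • opApp (powField A l) W x)))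
          - ∑ k ∈ range (N+1), fderiv ℝ (c k) x (P x (W x)) • opApp (powField A k) V x :=
        Finset.sum_sub_distrib _ _
      _ = (∑ k ∈ range (N+1),
            ((∑ l ∈ range (N+1),
              (c k x * c l x) • BrD (opApp (powField A k) V) (opApp (powField A l) W) x)
            + ∑ l ∈ range (N+1),
              (c k x * fderiv ℝ (c l) x (opApp (powField A k) V x)) • opApp (powField A l) W x))
          - ∑ k ∈ range (N+1), fderiv ℝ (c k) x (P x (W x)) • opApp (powField A k) V x := by
        rw [Finset.sum_congr rfl eS]
      _ = _ := by
        rw [Finset.sum_add_distrib, eJ2]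
  -- evaluate the right-hand side
  have eMAIN : (∑ k ∈ range (N+1), ∑ l ∈ range (N+1),
        Mf (fun y => c k y * c l y) (QQ A k l (BrD (n := n)))) V W x
      = (∑ k ∈ range (N+1), ∑ l ∈ range (N+1),
          (c k x * c l x) • powField A k x (powField A l x (BrD (n := n) V W x)))
        - (∑ k ∈ range (N+1), ∑ l ∈ range (N+1),
          (c k x * c l x) • powField A k x (BrD (n := n) V (opApp (powField A l) W) x))
        - (∑ k ∈ range (N+1), ∑ l ∈ range (N+1),
          (c k x * c l x) • powField A l x (BrD (n := n) (opApp (powField A k) V) W x))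
        + ∑ k ∈ range (N+1), ∑ l ∈ range (N+1),
          (c k x * c l x) • BrD (n := n) (opApp (powField A k) V) (opApp (powField A l) W) x := by
    simp only [Finset.sum_apply, Mf_apply]
    rw [Finset.sum_congr rfl (fun k (_ : k ∈ range (N+1)) => Finset.sum_congr rfl
      (fun l (_ : l ∈ range (N+1)) => by
        rw [QQ_apply', smul_add, smul_sub, smul_sub]))]
    simp only [Finset.sum_add_distrib, Finset.sum_sub_distrib]
  have eJel : Jel A c N P V W x
      = (∑ k ∈ range (N+1), fderiv ℝ (c k) x (P x (V x)) • opApp (powField A k) W x)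
        - (∑ k ∈ range (N+1), fderiv ℝ (c k) x (P x (W x)) • opApp (powField A k) V x)
        - (∑ k ∈ range (N+1), fderiv ℝ (c k) x (V x) • P x (opApp (powField A k) W x))
        + ∑ k ∈ range (N+1), fderiv ℝ (c k) x (W x) • P x (opApp (powField A k) V x) := by
    show (∑ k ∈ range (N+1), _) = _
    rw [Finset.sum_add_distrib, Finset.sum_sub_distrib, Finset.sum_sub_distrib]
  have eR : ((∑ k ∈ range (N+1), ∑ l ∈ range (N+1),
        Mf (fun y => c k y * c l y) (QQ A k l (BrD (n := n)))) + Jel A c N P) V W x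
      = (∑ k ∈ range (N+1), ∑ l ∈ range (N+1),
        Mf (fun y => c k y * c l y) (QQ A k l (BrD (n := n)))) V W x
        + Jel A c N P V W x := rfl
  rw [FF_apply, eR, eMAIN, eJel, H1, H2, H3, H4]
  abel

end Step1

end TorsionAux

namespace TorsionAux

open Finset Filter

variable {n : ℕ}

section Factor

variable (A : OpField n)

def uSum (k : ℕ) : Module.End ℝ (Bil n) := ∑ i ∈ range k, (LL A) ^ i * (S1 A) ^ (k - 1 - i)
def vSum (l : ℕ) : Module.End ℝ (Bil n) := ∑ i ∈ range l, (LL A) ^ i * (S2 A) ^ (l - 1 - i)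

lemma uSum_mul (k : ℕ) : uSum A k * (LL A - S1 A) = (LL A) ^ k - (S1 A) ^ k :=
  (comm_LL_S1 A A).geom_sum₂_mul k

lemma vSum_mul (l : ℕ) : vSum A l * (LL A - S2 A) = (LL A) ^ l - (S2 A) ^ l :=
  (comm_LL_S2 A A).geom_sum₂_mul l

lemma QQ_factor (j k l : ℕ) :
    (FF A) ^ j * QQ A k l = (uSum A k * vSum A l) * (FF A) ^ (j + 1) := by
  set a := LL A with ha
  set s := S1 A with hs
  set t := S2 A with ht
  have h_as : Commute a s := comm_LL_S1 A A
  have h_at : Commute a t := comm_LL_S2 A A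
  have h_st : Commute s t := comm_S1_S2 A A
  set p := a - s with hp
  set q := a - t with hq
  set u := uSum A k with hu
  set v := vSum A l with hv
  have h_pa : Commute p a := Commute.sub_left (Commute.refl a) h_as.symm
  have h_ps : Commute p s := Commute.sub_left h_as (Commute.refl s)
  have h_pt : Commute p t := Commute.sub_left h_at h_st
  have h_qa : Commute q a := Commute.sub_left (Commute.refl a) h_at.symm
  have h_qs : Commute q s := Commute.sub_left h_as h_st.symm
  have h_qt : Commute q t := Commute.sub_left h_at (Commute.refl t)
  have h_pu : Commute p u :=
    Commute.sum_right _ _ _ fun i _ => ((h_pa.pow_right i).mul_right (h_ps.pow_right _))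
  have h_pv : Commute p v :=
    Commute.sum_right _ _ _ fun i _ => ((h_pa.pow_right i).mul_right (h_pt.pow_right _))
  have h_qu : Commute q u :=
    Commute.sum_right _ _ _ fun i _ => ((h_qa.pow_right i).mul_right (h_qs.pow_right _))
  have h_qv : Commute q v :=
    Commute.sum_right _ _ _ fun i _ => ((h_qa.pow_right i).mul_right (h_qt.pow_right _))
  have hQQ : QQ A k l = (u * p) * (v * q) := by
    rw [hu, hv, hp, hq, uSum_mul, vSum_mul]; rfl
  have hFF : FF A = p * q := rfl
  have huvpq : (u * p) * (v * q) = (u * v) * (p * q) := by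
    rw [mul_assoc u p (v * q), ← mul_assoc p v q, h_pv.eq, mul_assoc v p q, ← mul_assoc]
  have h_pq_uv : Commute ((p * q) ^ j) (u * v) :=
    (((h_pu.mul_left h_qu)).mul_right ((h_pv.mul_left h_qv))).pow_left j
  rw [hQQ, hFF, huvpq, ← mul_assoc, h_pq_uv.eq, mul_assoc, ← pow_succ]

end Factor

section Descent

variable {U : Set (Vec n)} {A : OpField n} {N : ℕ} {c : ℕ → Vec n → ℝ} {P : OpField n}

lemma Pre.FFA (hA : ContDiffOn ℝ (⊤ : ℕ∞) A U) : Pre U (FF A) := by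
  have hsm : ∀ V : VF n, smo U V → smo U (opApp A V) := fun V hV => hA.clm_apply hV
  exact ((Pre.LL A).sub (Pre.S1 hsm)).mul ((Pre.LL A).sub (Pre.S2 hsm))

lemma Pre.FFP (hU : IsOpen U) (hA : ContDiffOn ℝ (⊤ : ℕ∞) A U) (hc : ∀ k, smo U (c k))
    (hP : ∀ x ∈ U, P x = ∑ k ∈ Finset.range (N + 1), c k x • A x ^ k) : Pre U (FF P) := by
  have hsm : ∀ V : VF n, smo U V → smo U (opApp P V) := fun V hV => smo_opApp_P hA hc hP hV
  exact ((Pre.LL P).sub (Pre.S1 hsm)).mul ((Pre.LL P).sub (Pre.S2 hsm))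

lemma Pre.uSum (hA : ContDiffOn ℝ (⊤ : ℕ∞) A U) (k : ℕ) : Pre U (uSum A k) := by
  have hsm : ∀ V : VF n, smo U V → smo U (opApp A V) := fun V hV => hA.clm_apply hV
  exact Pre.sum fun i _ => ((Pre.LL A).pow i).mul ((Pre.S1 hsm).pow _)

lemma Pre.vSum (hA : ContDiffOn ℝ (⊤ : ℕ∞) A U) (l : ℕ) : Pre U (vSum A l) := by
  have hsm : ∀ V : VF n, smo U V → smo U (opApp A V) := fun V hV => hA.clm_apply hV
  exact Pre.sum fun i _ => ((Pre.LL A).pow i).mul ((Pre.S2 hsm).pow _)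

lemma rel_zero : Rel U (0 : Bil n) 0 := fun _ _ _ _ _ _ => rfl

/-- If `(FF A)^(j+1)` kills `B` (relatively), then `(FF A)^j` kills each polynomial block. -/
lemma killterm (hA : ContDiffOn ℝ (⊤ : ℕ∞) A U) {j : ℕ} {B : Bil n}
    (hrel : Rel U (((FF A) ^ (j+1)) B) 0) (g : Vec n → ℝ) (k l : ℕ) :
    Rel U (((FF A) ^ j) (Mf g (QQ A k l B))) 0 := by
  match k, l with
  | 0, l =>
      rw [QQ_zero_left, LinearMap.zero_apply, map_zero, map_zero]
      exact rel_zero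
  | (k+1), 0 =>
      rw [QQ_zero_right, LinearMap.zero_apply, map_zero, map_zero]
      exact rel_zero
  | (k+1), (l+1) =>
      have hMg : Commute (Mf g) ((FF A) ^ j) := by
        refine Commute.pow_right ?_ j
        exact ((comm_Mf_LL g A).sub_right (comm_Mf_S1 g A)).mul_right
          ((comm_Mf_LL g A).sub_right (comm_Mf_S2 g A))
      have e : ((FF A) ^ j) (Mf g (QQ A (k+1) (l+1) B))
          = Mf g ((uSum A (k+1) * vSum A (l+1)) (((FF A) ^ (j+1)) B)) := by
        calc ((FF A) ^ j) (Mf g (QQ A (k+1) (l+1) B))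
            = (((FF A) ^ j) * Mf g) (QQ A (k+1) (l+1) B) := (Module.End.mul_apply _ _ _).symm
          _ = ((Mf g) * ((FF A) ^ j)) (QQ A (k+1) (l+1) B) := by rw [hMg.eq]
          _ = Mf g ((((FF A) ^ j) * QQ A (k+1) (l+1)) B) := by
              rw [Module.End.mul_apply, Module.End.mul_apply]
          _ = Mf g (((uSum A (k+1) * vSum A (l+1)) * (FF A) ^ (j+1)) B) := by rw [QQ_factor]
          _ = Mf g ((uSum A (k+1) * vSum A (l+1)) (((FF A) ^ (j+1)) B)) := by
              rw [Module.End.mul_apply]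
      rw [e]
      exact Rel.of_pre_zero (Pre.Mf g)
        (Rel.of_pre_zero ((Pre.uSum hA (k+1)).mul (Pre.vSum hA (l+1))) hrel)

/-- The descent invariant. -/
def Nj (U : Set (Vec n)) (A : OpField n) (j : ℕ) (B : Bil n) : Prop :=
  Good U B ∧ Rel U (((FF A) ^ j) B) 0

lemma descent (hU : IsOpen U) (hA : ContDiffOn ℝ (⊤ : ℕ∞) A U) (hc : ∀ k, smo U (c k))
    (hP : ∀ x ∈ U, P x = ∑ k ∈ Finset.range (N + 1), c k x • A x ^ k)
    {j : ℕ} {B : Bil n} (hB : Nj U A (j+1) B) : Nj U A j ((FF P) B) := by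
  have hsmP : ∀ V : VF n, smo U V → smo U (opApp P V) := fun V hV => smo_opApp_P hA hc hP hV
  constructor
  · have hG := hB.1
    have e : (FF P) B = (LL P) ((LL P) B - (S2 P) B) - (S1 P) ((LL P) B - (S2 P) B) := by
      show ((LL P - S1 P) * (LL P - S2 P)) B = _
      rw [Module.End.mul_apply, LinearMap.sub_apply, LinearMap.sub_apply]
    rw [e]
    exact (((hG.LL P).sub (hG.S2g hsmP)).LL P).sub (((hG.LL P).sub (hG.S2g hsmP)).S1g hsmP)
  · have hexp := expandGood hU hA hc hP hB.1
    have hpre : Pre U ((FF A) ^ j) := (Pre.FFA hA).pow j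
    refine (hpre _ _ hexp).trans ?_
    have e2 : ((FF A) ^ j) (∑ k ∈ range (N+1), ∑ l ∈ range (N+1),
          Mf (fun y => c k y * c l y) (QQ A k l B))
        = ∑ k ∈ range (N+1), ∑ l ∈ range (N+1),
          ((FF A) ^ j) (Mf (fun y => c k y * c l y) (QQ A k l B)) := by
      rw [map_sum]
      exact Finset.sum_congr rfl fun k _ => map_sum _ _ _
    rw [e2]
    exact Rel.zero_sum fun k _ => Rel.zero_sum fun l _ => killterm hA hB.2 _ k l

lemma iterate (hU : IsOpen U) (hA : ContDiffOn ℝ (⊤ : ℕ∞) A U) (hc : ∀ k, smo U (c k))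
    (hP : ∀ x ∈ U, P x = ∑ k ∈ Finset.range (N + 1), c k x • A x ^ k) :
    ∀ (j : ℕ) (B : Bil n), Nj U A j B → Rel U (((FF P) ^ j) B) 0 := by
  intro j
  induction j with
  | zero =>
      intro B h
      have := h.2
      rw [pow_zero, Module.End.one_apply] at this
      rw [pow_zero, Module.End.one_apply]
      exact this
  | succ j ih =>
      intro B h
      have e : ((FF P) ^ (j+1)) B = ((FF P) ^ j) ((FF P) B) := by
        rw [pow_succ, Module.End.mul_apply]
      rw [e]
      exact ih _ (descent hU hA hc hP h)

end Descent

end TorsionAux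

namespace TorsionAux

open Finset Filter

variable {n : ℕ}

section JelKill

variable {U : Set (Vec n)} {A : OpField n} {N : ℕ} {c : ℕ → Vec n → ℝ} {P : OpField n}

lemma jelkill (hU : IsOpen U) (hA : ContDiffOn ℝ (⊤ : ℕ∞) A U) (hc : ∀ k, smo U (c k))
    (hP : ∀ x ∈ U, P x = ∑ k ∈ Finset.range (N + 1), c k x • A x ^ k) :
    Rel U ((FF P) (Jel A c N P)) 0 := by
  have hsplit : Jel A c N P = ∑ k ∈ range (N+1),
      (((fun V W x => ((fderiv ℝ (c k) x).comp (P x)) (V x) • powField A k x (W x))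
       - (fun V W x => ((fderiv ℝ (c k) x).comp (P x)) (W x) • powField A k x (V x))
       - (fun V W x => (fderiv ℝ (c k) x) (V x) • ((P x).comp (powField A k x)) (W x))
       + (fun V W x => (fderiv ℝ (c k) x) (W x) • ((P x).comp (powField A k x)) (V x))) : Bil n) := by
    funext V W x
    rw [Finset.sum_apply, Finset.sum_apply, Finset.sum_apply]
    exact Finset.sum_congr rfl fun k _ => rfl
  rw [hsplit, map_sum]
  refine Rel.zero_sum fun k _ => ?_
  have hC1 : ∀ x ∈ U, Commute (P x) (powField A k x) := fun x hx => commPA hP hx k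
  have hC3 : ∀ x ∈ U, Commute (P x) ((P x).comp (powField A k x)) :=
    fun x hx => (Commute.refl (P x)).mul_right (commPA hP hx k)
  have h1 := classkill₁ hP (fun x => (fderiv ℝ (c k) x).comp (P x)) (powField A k) hC1
  have h2 := classkill₂ hP (fun x => (fderiv ℝ (c k) x).comp (P x)) (powField A k) hC1
  have h3 := classkill₁ hP (fun x => fderiv ℝ (c k) x) (fun x => (P x).comp (powField A k x)) hC3
  have h4 := classkill₂ hP (fun x => fderiv ℝ (c k) x) (fun x => (P x).comp (powField A k x)) hC3
  rw [map_add, map_sub, map_sub]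
  have hcomb := ((h1.sub h2).sub h3).add h4
  have z : ((((0 : Bil n) - 0) - 0) + 0) = 0 := by simp
  rw [z] at hcomb
  exact hcomb

end JelKill

section Final

variable {U : Set (Vec n)} {A : OpField n} {N : ℕ} {c : ℕ → Vec n → ℝ} {P : OpField n}

theorem main (hU : IsOpen U) (hA : ContDiffOn ℝ (⊤ : ℕ∞) A U)
    (m : ℕ) (hm : 2 ≤ m)
    (hvan : ∀ X Y : VF n, ContDiffOn ℝ (⊤ : ℕ∞) X U → ContDiffOn ℝ (⊤ : ℕ∞) Y U →
      ∀ x ∈ U, genTorsion A m X Y x = 0)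
    (hc : ∀ k, ContDiffOn ℝ (⊤ : ℕ∞) (c k) U)
    (hP : ∀ x ∈ U, P x = ∑ k ∈ Finset.range (N + 1), c k x • A x ^ k) :
    ∀ X Y : VF n, ContDiffOn ℝ (⊤ : ℕ∞) X U → ContDiffOn ℝ (⊤ : ℕ∞) Y U →
      ∀ x ∈ U, genTorsion P m X Y x = 0 := by
  intro X Y hX hY x hx
  obtain ⟨m'', rfl⟩ : ∃ m'', m = m'' + 2 := ⟨m - 2, by omega⟩
  have hcs : ∀ k, smo U (c k) := hc
  have relFFm : Rel U (((FF A) ^ (m''+2)) (BrD (n := n))) 0 := by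
    intro V W hV hW y hy
    have h := hvan V W hV hW y hy
    rw [genTorsion_eq] at h
    exact h
  set E1 : Bil n := ∑ k ∈ range (N+1), ∑ l ∈ range (N+1),
    Mf (fun y => c k y * c l y) (QQ A k l (BrD (n := n))) with hE1def
  have hNj : Nj U A (m''+1) E1 := by
    constructor
    · exact Good.sum fun k _ => Good.sum fun l _ => Good.Mf _ (good_QQ_Br hU hA k l)
    · have e2 : ((FF A) ^ (m''+1)) E1 = ∑ k ∈ range (N+1), ∑ l ∈ range (N+1),
          ((FF A) ^ (m''+1)) (Mf (fun y => c k y * c l y) (QQ A k l (BrD (n := n)))) := by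
        rw [hE1def, map_sum]
        exact Finset.sum_congr rfl fun k _ => map_sum _ _ _
      rw [e2]
      exact Rel.zero_sum fun k _ => Rel.zero_sum fun l _ => killterm hA relFFm _ k l
  have hE1kill : Rel U (((FF P) ^ (m''+1)) E1) 0 := iterate hU hA hcs hP (m''+1) E1 hNj
  have hJkill : Rel U (((FF P) ^ (m''+1)) (Jel A c N P)) 0 := by
    have e : ((FF P) ^ (m''+1)) (Jel A c N P) = ((FF P) ^ m'') ((FF P) (Jel A c N P)) := by
      rw [pow_succ, Module.End.mul_apply]
    rw [e]
    exact Rel.of_pre_zero ((Pre.FFP hU hA hcs hP).pow m'') (jelkill hU hA hcs hP)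
  have hfin : Rel U (((FF P) ^ (m''+2)) (BrD (n := n))) 0 := by
    have e : ((FF P) ^ (m''+2)) (BrD (n := n)) = ((FF P) ^ (m''+1)) ((FF P) (BrD (n := n))) := by
      rw [pow_succ, Module.End.mul_apply]
    rw [e]
    have h2 : Rel U (((FF P) ^ (m''+1)) ((FF P) (BrD (n := n))))
        (((FF P) ^ (m''+1)) (E1 + Jel A c N P)) :=
      ((Pre.FFP hU hA hcs hP).pow (m''+1)) _ _ (step1 hU hA hcs hP)
    refine h2.trans ?_
    have e3 : ((FF P) ^ (m''+1)) (E1 + Jel A c N P)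
        = ((FF P) ^ (m''+1)) E1 + ((FF P) ^ (m''+1)) (Jel A c N P) := map_add _ _ _
    rw [e3]
    have h4 := hE1kill.add hJkill
    rwa [add_zero] at h4
  have hres := hfin X Y hX hY x hx
  rw [genTorsion_eq]
  exact hres

end Final

end TorsionAux

/-- if τ⁽ᵐ⁾_A ≡ 0 on U for some m ≥ 2, then every polynomial
P(x) = Σ_{k=0}^{N} c_k(x)·A(x)ᵏ with smooth coefficients also has τ⁽ᵐ⁾_P ≡ 0 on U. -/
theorem genTorsion_poly_vanishing {n : ℕ} (U : Set (Vec n)) (hU : IsOpen U)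
    (A : OpField n) (hA : ContDiffOn ℝ (⊤ : ℕ∞) A U)
    (m : ℕ) (hm : 2 ≤ m)
    (hvan : ∀ X Y : VF n, ContDiffOn ℝ (⊤ : ℕ∞) X U → ContDiffOn ℝ (⊤ : ℕ∞) Y U →
      ∀ x ∈ U, genTorsion A m X Y x = 0)
    (N : ℕ) (c : ℕ → Vec n → ℝ) (hc : ∀ k, ContDiffOn ℝ (⊤ : ℕ∞) (c k) U)
    (P : OpField n) (hP : ∀ x ∈ U, P x = ∑ k ∈ Finset.range (N + 1), c k x • A x ^ k) :
    ∀ X Y : VF n, ContDiffOn ℝ (⊤ : ℕ∞) X U → ContDiffOn ℝ (⊤ : ℕ∞) Y U →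
      ∀ x ∈ U, genTorsion P m X Y x = 0 := by
  exact TorsionAux.main hU hA m hm hvan hc hP
end
end
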